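/- arXiv:2212.12854 — 2 statements merged into one kernel-verified Lean document; each statement's English description precedes it below -/
import Mathlib

section
/- Monotonicity of penalized GBSDE solutions: Let f : Ω×[0,T]×ℝ → [0,∞) be nonnegative with y ↦ f(t,y) nonincreasing, and for each n ∈ ℕ let (Y^n,Z^n) be a solution to the GBSDE Y^n_t = ξ_T − ∫_{(t,T]} Z^n_s dM_s + ∫_{(t,T]} n·f(s,Y^n_s) dA_s. Then for every n ∈ ℕ, P(Y^{n+1}_t ≥ Y^n_t for all t ∈ [0,T]) = 1. -/
open MeasureTheory Set Filter Function
open scoped ENNReal NNReal Topology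

noncomputable section

namespace GBSDE

variable {Ω : Type*} {E : Type*}

open Classical in
/-- The Lebesgue–Stieltjes measure generated by a path `f : ℝ → ℝ`; junk value `0`
if the path is not nondecreasing and right-continuous. -/
noncomputable def lsMeasure (f : ℝ → ℝ) : Measure ℝ :=
  if h : Monotone f ∧ ∀ x, ContinuousWithinAt f (Set.Ici x) x
    then (⟨f, h.1, h.2⟩ : StieltjesFunction ℝ).measure else 0

/-- A real function has left limits everywhere. -/
def HasLeftLimits (f : ℝ → ℝ) : Prop := ∀ x : ℝ, ∃ l, Tendsto f (𝓝[<] x) (𝓝 l)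

/-- A real function has right limits everywhere. -/
def HasRightLimits (f : ℝ → ℝ) : Prop := ∀ x : ℝ, ∃ l, Tendsto f (𝓝[>] x) (𝓝 l)

/-- A real function is càdlàg: right-continuous with left limits. -/
def Cadlag (f : ℝ → ℝ) : Prop :=
  (∀ x, ContinuousWithinAt f (Set.Ici x) x) ∧ HasLeftLimits f

/-- A real function is làdlàg: it has left and right limits everywhere. -/
def Ladlag (f : ℝ → ℝ) : Prop := HasLeftLimits f ∧ HasRightLimits f

variable {m0 : MeasurableSpace Ω}

/-- The driver `A`: an adapted, continuous, nondecreasing process starting from `0`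
which is square-integrable at the horizon `T`. -/
structure IsDriver (T : ℝ) (𝓕 : Filtration ℝ m0) (P : Measure Ω) (A : ℝ → Ω → ℝ) : Prop where
  adapted : StronglyAdapted 𝓕 A
  mono : ∀ ω, Monotone fun t => A t ω
  cont : ∀ ω, Continuous fun t => A t ω
  zero : ∀ ω, A 0 ω = 0
  sq_int : (∫⁻ ω, (ENNReal.ofReal (A T ω)) ^ 2 ∂P) < ∞

/-- The squared `S²(𝔽)` (semi)norm of a process: `E[sup_{t ∈ [0,T]} |X_t|²]`. -/
def sqS2 (T : ℝ) (P : Measure Ω) (X : ℝ → Ω → ℝ) : ℝ≥0∞ :=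
  ∫⁻ ω, ⨆ t : Set.Icc (0:ℝ) T, ((‖X t ω‖₊ : ℝ≥0∞)) ^ 2 ∂P

def MemS2 (T : ℝ) (P : Measure Ω) (X : ℝ → Ω → ℝ) : Prop := sqS2 T P X < ∞

variable [NormedAddCommGroup E] [NormedSpace ℝ E] [CompleteSpace E]

/-- The squared `H²(M)` (semi)norm of a process: `E[∫_{(0,T]} |Z_s|² d[M]_s]`, where the
quadratic variation `[M]` is recorded through the process `QV`. -/
def sqH2 (T : ℝ) (P : Measure Ω) (QV : ℝ → Ω → ℝ) (Z : ℝ → Ω → E) : ℝ≥0∞ :=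
  ∫⁻ ω, ∫⁻ s in Set.Ioc (0:ℝ) T, ((‖Z s ω‖₊ : ℝ≥0∞)) ^ 2 ∂(lsMeasure fun u => QV u ω) ∂P

def MemH2 (T : ℝ) (P : Measure Ω) (QV : ℝ → Ω → ℝ) (Z : ℝ → Ω → E) : Prop :=
  sqH2 T P QV Z < ∞

/-- An abstract Itô stochastic-integration context for a square-integrable martingale `M`
possessing the predictable representation property: it records the martingale `M`, its
quadratic (co)variation process `QV = [M]`, and the stochastic integral operator
`int Z = ∫ Z dM` together with its basic properties (martingale property, Itô isometry,
linearity and the predictable representation property). -/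
structure ItoCalculus (E : Type*) [NormedAddCommGroup E] [NormedSpace ℝ E] [CompleteSpace E]
    {Ω : Type*} {m0 : MeasurableSpace Ω}
    (T : ℝ) (𝓕 : Filtration ℝ m0) (P : Measure Ω) where
  M : ℝ → Ω → E
  martM : Martingale M 𝓕 P
  sqIntM : ∀ t, MemLp (M t) 2 P
  QV : ℝ → Ω → ℝ
  qv_adapted : StronglyAdapted 𝓕 QV
  qv_mono : ∀ ω, Monotone fun t => QV t ω
  qv_rc : ∀ ω, ∀ x, ContinuousWithinAt (fun t => QV t ω) (Set.Ici x) x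
  qv_zero : ∀ ω, QV 0 ω = 0
  qv_int : (∫⁻ ω, ENNReal.ofReal (QV T ω) ∂P) < ∞
  int : (ℝ → Ω → E) → ℝ → Ω → ℝ
  int_zero : ∀ Z ω, int Z 0 ω = 0
  int_martingale : ∀ Z, ProgMeasurable 𝓕 Z → MemH2 T P QV Z → Martingale (int Z) 𝓕 P
  int_isometry : ∀ Z, ProgMeasurable 𝓕 Z → MemH2 T P QV Z → ∀ t ∈ Set.Icc (0:ℝ) T,
    (∫⁻ ω, ENNReal.ofReal ((int Z t ω) ^ 2) ∂P)
      = ∫⁻ ω, ∫⁻ s in Set.Ioc (0:ℝ) t, ((‖Z s ω‖₊ : ℝ≥0∞)) ^ 2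
          ∂(lsMeasure fun u => QV u ω) ∂P
  int_add : ∀ Z Z' : ℝ → Ω → E, ProgMeasurable 𝓕 Z → MemH2 T P QV Z →
    ProgMeasurable 𝓕 Z' → MemH2 T P QV Z' → ∀ t : ℝ,
    (fun ω => int (fun s ω' => Z s ω' + Z' s ω') t ω) =ᵐ[P] fun ω => int Z t ω + int Z' t ω
  int_smul : ∀ (c : ℝ) (Z : ℝ → Ω → E), ∀ t : ℝ,
    (fun ω => int (fun s ω' => c • Z s ω') t ω) =ᵐ[P] fun ω => c * int Z t ω
  prp : ∀ X : ℝ → Ω → ℝ, Martingale X 𝓕 P → (∀ t, MemLp (X t) 2 P) →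
    ∃ Z : ℝ → Ω → E, ProgMeasurable 𝓕 Z ∧ MemH2 T P QV Z ∧
      ∀ t ∈ Set.Icc (0:ℝ) T, X t =ᵐ[P] fun ω => X 0 ω + int Z t ω

variable {T : ℝ} {𝓕 : Filtration ℝ m0} {P : Measure Ω}

/-- Standing assumptions on the generator `g = g(t, y, ω)`: predictable dependence on
`(t, ω)`, square-integrability of `g(·, 0)` against `dA`, and Lipschitz continuity in `y`
with constant `L`. -/
structure StandingGenerator (T : ℝ) (𝓕 : Filtration ℝ m0) (P : Measure Ω)
    (A : ℝ → Ω → ℝ) (g : ℝ → ℝ → Ω → ℝ) (L : ℝ) : Prop where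
  meas : ∀ y : ℝ, ProgMeasurable 𝓕 fun t ω => g t y ω
  sq_int : (∫⁻ ω, ∫⁻ t in Set.Ioc (0:ℝ) T, ENNReal.ofReal ((g t 0 ω) ^ 2)
    ∂(lsMeasure fun u => A u ω) ∂P) < ∞
  lipschitz : ∀ t ω y y', |g t y ω - g t y' ω| ≤ L * |y - y'|

/-- `(Y, Z)` is a solution of the generalized BSDE with data `(M, A, g, ξ)`; the process
`SC.int Z` plays the role of the Itô integral `∫ Z dM`. -/
def IsGBSDESolution (SC : ItoCalculus E T 𝓕 P) (A : ℝ → Ω → ℝ)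
    (g : ℝ → ℝ → Ω → ℝ) (ξ : Ω → ℝ) (Y : ℝ → Ω → ℝ) (Z : ℝ → Ω → E) : Prop :=
  StronglyAdapted 𝓕 Y ∧ (∀ ω, Cadlag fun t => Y t ω) ∧ ProgMeasurable 𝓕 Z ∧
  Martingale (SC.int Z) 𝓕 P ∧
  (∀ ω, IntegrableOn (fun s => g s (Y s ω) ω) (Set.Ioc 0 T) (lsMeasure fun u => A u ω)) ∧
  ∀ᵐ ω ∂P, ∀ t ∈ Set.Icc (0:ℝ) T,
    Y t ω = ξ ω - (SC.int Z T ω - SC.int Z t ω)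
      + ∫ s in Set.Ioc t T, g s (Y s ω) ω ∂(lsMeasure fun u => A u ω)

/-- The right support `S^r(A)(ω)` of the (pathwise) measure generated by `A`. -/
def rightSupport (A : ℝ → Ω → ℝ) (ω : Ω) : Set ℝ :=
  {t : ℝ | ∀ ε > 0, A t ω < A (t + ε) ω}

/-- `V` is the essential supremum of the family `f i`, `i : ι`, under `P`. -/
def IsEssSup {ι : Sort*} (P : Measure Ω) (f : ι → Ω → ℝ) (V : Ω → ℝ) : Prop :=
  (∀ i, f i ≤ᵐ[P] V) ∧ ∀ U : Ω → ℝ, (∀ i, f i ≤ᵐ[P] U) → V ≤ᵐ[P] U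

/-- `V` is the essential infimum of the family `f i`, `i : ι`, under `P`. -/
def IsEssInf {ι : Sort*} (P : Measure Ω) (f : ι → Ω → ℝ) (V : Ω → ℝ) : Prop :=
  (∀ i, V ≤ᵐ[P] f i) ∧ ∀ U : Ω → ℝ, (∀ i, U ≤ᵐ[P] f i) → U ≤ᵐ[P] V

/-- Inequality `X ≤ Y` between optional processes: `X_τ ≤ Y_τ` a.s. for every
`𝔽`-stopping time `τ` with values in `[0, T]`. -/
def ProcLE (T : ℝ) (𝓕 : Filtration ℝ m0) (P : Measure Ω) (X Y : ℝ → Ω → ℝ) : Prop :=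
  ∀ τ : Ω → ℝ, IsStoppingTime 𝓕 (fun ω => (τ ω : WithTop ℝ)) → (∀ ω, τ ω ∈ Set.Icc 0 T) →
    (fun ω => X (τ ω) ω) ≤ᵐ[P] fun ω => Y (τ ω) ω

/-- The left-upper-semicontinuous envelope `ζ̄_t = limsup_{s↑t} ζ_s` of a path. -/
def luscEnvelope (f : ℝ → ℝ) (t : ℝ) : ℝ := limsup f (𝓝[<] t)

/-- `(Y, Z, K)` is a solution of the reflected generalized BSDE with data `(M, A, g, ζ)`:
the equation holds at every stopping time, `Y` dominates the obstacle `ζ`, and the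
nondecreasing làdlàg predictable process `K = K^c + K^d + K^g` satisfies the Skorokhod
conditions. -/
structure IsRGBSDESolution (SC : ItoCalculus E T 𝓕 P) (A : ℝ → Ω → ℝ)
    (g : ℝ → ℝ → Ω → ℝ) (ζ : ℝ → Ω → ℝ)
    (Y : ℝ → Ω → ℝ) (Z : ℝ → Ω → E) (K : ℝ → Ω → ℝ) : Prop where
  adaptedY : StronglyAdapted 𝓕 Y
  ladlagY : ∀ ω, Ladlag fun t => Y t ω
  progZ : ProgMeasurable 𝓕 Z
  progK : ProgMeasurable 𝓕 K
  monoK : ∀ ω, Monotone fun t => K t ω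
  ladlagK : ∀ ω, Ladlag fun t => K t ω
  zeroK : ∀ ω, K 0 ω = 0
  martN : Martingale (SC.int Z) 𝓕 P
  intg : ∀ ω, IntegrableOn (fun s => g s (Y s ω) ω) (Set.Ioc 0 T) (lsMeasure fun u => A u ω)
  eqn : ∀ τ : Ω → ℝ, IsStoppingTime 𝓕 (fun ω => (τ ω : WithTop ℝ)) → (∀ ω, τ ω ∈ Set.Icc 0 T) →
    ∀ᵐ ω ∂P, Y (τ ω) ω = ζ T ω - (SC.int Z T ω - SC.int Z (τ ω) ω)
      + (∫ s in Set.Ioc (τ ω) T, g s (Y s ω) ω ∂(lsMeasure fun u => A u ω))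
      + (K T ω - K (τ ω) ω)
  dominates : ∀ᵐ ω ∂P, ∀ t ∈ Set.Icc (0:ℝ) T, ζ t ω ≤ Y t ω
  skorokhod : ∃ Kc Kd Kg : ℝ → Ω → ℝ,
    (∀ ω t, K t ω = Kc t ω + Kd t ω + Kg t ω) ∧
    (∀ ω, Continuous fun t => Kc t ω) ∧ (∀ ω, Monotone fun t => Kc t ω) ∧
    (∀ ω, Monotone fun t => Kd t ω) ∧
    (∀ ω, ∀ x, ContinuousWithinAt (fun t => Kd t ω) (Set.Ici x) x) ∧
    (∀ ω, Monotone fun t => Kg t ω) ∧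
    (∀ ω, ∀ x, ContinuousWithinAt (fun t => Kg t ω) (Set.Iic x) x) ∧
    (∀ ω, Kc 0 ω = 0 ∧ Kd 0 ω = 0 ∧ Kg 0 ω = 0) ∧
    (∀ᵐ ω ∂P,
      (lsMeasure (fun t => Kc t ω)) {s : ℝ | s ∈ Set.Ioc (0:ℝ) T ∧
        luscEnvelope (fun u => ζ u ω) s < Function.leftLim (fun u => Y u ω) s} = 0 ∧
      (∀ t ∈ Set.Ioc (0:ℝ) T,
        (Function.leftLim (fun u => Y u ω) t - luscEnvelope (fun u => ζ u ω) t)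
          * (Kd t ω - Function.leftLim (fun u => Kd u ω) t) = 0) ∧
      (∀ t ∈ Set.Ico (0:ℝ) T,
        (Y t ω - ζ t ω) * (Function.rightLim (fun u => Kg u ω) t - Kg t ω) = 0))

/-- A predictable (announceable) stopping time. -/
def IsPredictableTime (𝓕 : Filtration ℝ m0) (τ : Ω → ℝ) : Prop :=
  IsStoppingTime 𝓕 (fun ω => (τ ω : WithTop ℝ)) ∧ ∃ σ : ℕ → Ω → ℝ,
    (∀ n, IsStoppingTime 𝓕 (fun ω => (σ n ω : WithTop ℝ))) ∧ (∀ ω, Monotone fun n => σ n ω) ∧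
    (∀ n ω, 0 < τ ω → σ n ω < τ ω) ∧ ∀ ω, Tendsto (fun n => σ n ω) atTop (𝓝 (τ ω))

/-- Quasi-left-continuity of the filtration: no (càdlàg) `𝔽`-martingale jumps at a
predictable stopping time. -/
def QuasiLeftContinuous (𝓕 : Filtration ℝ m0) (P : Measure Ω) : Prop :=
  ∀ X : ℝ → Ω → ℝ, Martingale X 𝓕 P → (∀ ω, Cadlag fun t => X t ω) →
    ∀ τ : Ω → ℝ, IsPredictableTime 𝓕 τ →
      ∀ᵐ ω ∂P, Function.leftLim (fun t => X t ω) (τ ω) = X (τ ω) ω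

end GBSDE


namespace GBSDE

variable {Ω E : Type*} {m0 : MeasurableSpace Ω}
  [NormedAddCommGroup E] [NormedSpace ℝ E] [CompleteSpace E]


section AuxComparison

variable {m0' : MeasurableSpace Ω} {𝓕 : Filtration ℝ m0'} {P : Measure Ω}




def clamp (c x : ℝ) : ℝ := max (min x c) (-c)

lemma continuous_clamp (c : ℝ) : Continuous (clamp c) :=
  (continuous_id.min continuous_const).max continuous_const

lemma abs_clamp_le {c : ℝ} (hc : 0 ≤ c) (x : ℝ) : |clamp c x| ≤ c := by
  rw [abs_le]
  constructor
  · exact le_max_right _ _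
  · exact max_le ((min_le_right _ _)) (neg_le_self hc)

lemma le_clamp {ε c x : ℝ} (hc : ε ≤ c) (hx : ε ≤ x) : ε ≤ clamp c x :=
  le_max_of_le_left (le_min hx hc)

lemma clamp_eq {c x : ℝ} (h : |x| < c) : clamp c x = x := by
  have h1 := (abs_lt.1 h).1
  have h2 := (abs_lt.1 h).2
  unfold clamp
  rw [min_eq_left h2.le, max_eq_left h1.le]

lemma abs_sub_clamp_le {c : ℝ} (hc : 0 ≤ c) (x : ℝ) : |x - clamp c x| ≤ |x| := by
  unfold clamp
  rcases le_total x c with h | h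
  · rw [min_eq_left h]
    rcases le_total (-c) x with h' | h'
    · rw [max_eq_left h']; simp
    · rw [max_eq_right h']
      have hx0 : x ≤ 0 := h'.trans (neg_nonpos.2 hc)
      rw [abs_of_nonpos hx0, abs_of_nonpos (by linarith : x - -c ≤ 0)]
      linarith
  · rw [min_eq_right h, max_eq_left (by linarith : -c ≤ c)]
    have hx0 : 0 ≤ x := hc.trans h
    rw [abs_of_nonneg hx0, abs_of_nonneg (by linarith : 0 ≤ x - c)]
    linarith

/-- Absolute continuity of the integral of a fixed integrable function. -/
lemma abscont [IsFiniteMeasure P] {H : Ω → ℝ} (hm : Measurable H) (hH : Integrable H P)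
    {ρ : ℝ} (hρ : 0 < ρ) :
    ∃ δ > 0, ∀ s : Set Ω, MeasurableSet s → (P s).toReal < δ → ∫ ω in s, |H ω| ∂P ≤ ρ := by
  have habs : Integrable (fun ω => |H ω|) P := hH.abs
  set F : ℕ → Ω → ℝ := fun k => {ω | (k : ℝ) ≤ |H ω|}.indicator (fun ω => |H ω|) with hF
  have hsetmeas : ∀ k : ℕ, MeasurableSet {ω | (k : ℝ) ≤ |H ω|} := fun k =>
    measurableSet_le measurable_const hm.abs
  have htend : Tendsto (fun k => ∫ ω, F k ω ∂P) atTop (𝓝 (∫ _ω, (0:ℝ) ∂P)) := by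
    apply tendsto_integral_of_dominated_convergence (fun ω => |H ω|)
    · exact fun k => (habs.aestronglyMeasurable.indicator (hsetmeas k))
    · exact habs
    · intro k
      filter_upwards with ω
      rw [Real.norm_eq_abs, hF]
      simp only
      by_cases h : ω ∈ {ω | (k : ℝ) ≤ |H ω|}
      · rw [Set.indicator_of_mem h, abs_abs]
      · rw [Set.indicator_of_notMem h]; simp
    · filter_upwards with ω
      obtain ⟨K, hK⟩ := exists_nat_gt |H ω|
      apply tendsto_const_nhds.congr'
      filter_upwards [eventually_ge_atTop K] with k hk
      rw [hF]
      simp only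
      rw [Set.indicator_of_notMem]
      simp only [Set.mem_setOf_eq, not_le]
      exact lt_of_lt_of_le hK (by exact_mod_cast hk)
  rw [integral_const, smul_zero] at htend
  obtain ⟨K, hK⟩ := (htend.eventually_lt_const (half_pos hρ)).exists
  refine ⟨ρ / (2 * ((K : ℝ) + 1)), by positivity, fun s hs hss => ?_⟩
  have hsplit : ∀ ω, |H ω| = F K ω + ({ω | |H ω| < (K : ℝ)}.indicator (fun ω => |H ω|)) ω := by
    intro ω
    simp only [hF, Set.indicator_apply, Set.mem_setOf_eq]
    by_cases h : (K : ℝ) ≤ |H ω|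
    · rw [if_pos h, if_neg (not_lt.2 h)]; ring
    · rw [if_neg h, if_pos (not_le.1 h)]; ring
  have hint1 : IntegrableOn (F K) s P := (habs.indicator (hsetmeas K)).integrableOn
  have hint2 : IntegrableOn ({ω | |H ω| < (K : ℝ)}.indicator (fun ω => |H ω|)) s P :=
    (habs.indicator (measurableSet_lt hm.abs measurable_const)).integrableOn
  calc ∫ ω in s, |H ω| ∂P
      = (∫ ω in s, F K ω ∂P) + ∫ ω in s, ({ω | |H ω| < (K : ℝ)}.indicator (fun ω => |H ω|)) ω ∂P := by
        rw [← integral_add hint1 hint2]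
        exact setIntegral_congr_ae hs (by filter_upwards with ω _ using hsplit ω)
    _ ≤ ρ / 2 + (K : ℝ) * (P s).toReal := by
        gcongr
        · exact le_of_lt (lt_of_le_of_lt (setIntegral_le_integral (habs.indicator (hsetmeas K))
            (by filter_upwards with ω; exact Set.indicator_nonneg (fun _ _ => abs_nonneg _) ω)) hK)
        · calc ∫ ω in s, ({ω | |H ω| < (K : ℝ)}.indicator (fun ω => |H ω|)) ω ∂P
              ≤ ∫ _ω in s, (K : ℝ) ∂P := by
                apply setIntegral_mono_on hint2 (integrableOn_const (measure_ne_top _ _)) hs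
                intro ω _
                by_cases h : ω ∈ {ω | |H ω| < (K : ℝ)}
                · rw [Set.indicator_of_mem h]; exact (h : |H ω| < _).le
                · rw [Set.indicator_of_notMem h]; positivity
            _ = (K : ℝ) * (P s).toReal := by rw [setIntegral_const, smul_eq_mul, mul_comm]; rfl
    _ ≤ ρ := by
        have hK0 : (0:ℝ) ≤ (K:ℝ) := Nat.cast_nonneg K
        have h1 : (K:ℝ) * (P s).toReal ≤ (K:ℝ) * (ρ / (2*((K:ℝ)+1))) :=
          mul_le_mul_of_nonneg_left hss.le hK0
        have h2 : (K:ℝ) * (ρ / (2*((K:ℝ)+1))) ≤ ρ/2 := by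
          rw [mul_div_assoc'] at *
          rw [div_le_div_iff₀ (by positivity) (by norm_num : (0:ℝ) < 2)]
          nlinarith
        linarith


section Grid

variable [IsFiniteMeasure P] {X : ℝ → Ω → ℝ} {J : ℕ} {g : ℕ → ℝ} {σ : Ω → ℝ}

/-- pointwise representation of the stopped value over a finite grid -/
lemma stopped_rep (hg : StrictMono g)
    (hval : ∀ ω, ∃ j, 1 ≤ j ∧ j ≤ J ∧ σ ω = g j) (X : ℝ → Ω → ℝ) (ω : Ω) :
    X (σ ω) ω = X (g 0) ω + ∑ j ∈ Finset.range J,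
      ({ω' | g (j+1) ≤ σ ω'}.indicator (fun ω' => X (g (j+1)) ω' - X (g j) ω')) ω := by
  classical
  obtain ⟨i, hi1, hiJ, hσ⟩ := hval ω
  have hterm : ∀ j, ({ω' | g (j+1) ≤ σ ω'}.indicator
      (fun ω' => X (g (j+1)) ω' - X (g j) ω')) ω
      = if j < i then X (g (j+1)) ω - X (g j) ω else 0 := by
    intro j
    rw [Set.indicator_apply]
    congr 1
    simp only [Set.mem_setOf_eq, hσ, hg.le_iff_le, eq_iff_iff]
    omega
  rw [Finset.sum_congr rfl (fun j _ => hterm j)]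
  have hfil : Finset.filter (fun j => j < i) (Finset.range J) = Finset.range i := by
    ext j; simp only [Finset.mem_filter, Finset.mem_range]; omega
  rw [← Finset.sum_filter, hfil, Finset.sum_range_sub (fun j => X (g j) ω), hσ]
  ring

lemma stopped_rep_eq (hg : StrictMono g)
    (hval : ∀ ω, ∃ j, 1 ≤ j ∧ j ≤ J ∧ σ ω = g j) (F : ℝ → Ω → ℝ) (ω : Ω) :
    F (σ ω) ω = ∑ j ∈ Finset.Icc 1 J,
      ({ω' | σ ω' = g j}.indicator (fun ω' => F (g j) ω') ω) := by
  classical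
  obtain ⟨i, hi1, hiJ, hσ⟩ := hval ω
  rw [Finset.sum_eq_single i]
  · rw [Set.indicator_of_mem (by simpa [Set.mem_setOf_eq] using hσ), hσ]
  · intro j hj hne
    apply Set.indicator_of_notMem
    simp only [Set.mem_setOf_eq, hσ]
    exact fun h => hne ((hg.injective h).symm)
  · intro h
    exact absurd (Finset.mem_Icc.2 ⟨hi1, hiJ⟩) h

lemma optional_stopping_fin (hX : Martingale X 𝓕 P) (hg : StrictMono g)
    (hval : ∀ ω, ∃ j, 1 ≤ j ∧ j ≤ J ∧ σ ω = g j)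
    (hmeas : ∀ j, 1 ≤ j → j ≤ J → MeasurableSet[𝓕 (g j)] {ω | σ ω ≤ g j})
    {B : Set Ω} (hB : MeasurableSet[𝓕 (g 0)] B) :
    Integrable (fun ω => X (σ ω) ω) P ∧
    Measurable (fun ω => X (σ ω) ω) ∧
    ∫ ω in B, X (σ ω) ω ∂P = ∫ ω in B, X (g 0) ω ∂P := by
  classical
  set C : ℕ → Set Ω := fun j => {ω | g (j+1) ≤ σ ω} with hC
  have hCmeas : ∀ j, j < J → MeasurableSet[𝓕 (g j)] (C j) := by
    intro j hj
    rcases Nat.eq_zero_or_pos j with rfl | hj1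
    · have : C 0 = Set.univ := by
        ext ω
        obtain ⟨i, hi1, hiJ, hσ⟩ := hval ω
        simp only [hC, Set.mem_setOf_eq, Set.mem_univ, iff_true, hσ]
        exact hg.monotone hi1
      rw [this]; exact MeasurableSet.univ
    · have : C j = {ω | σ ω ≤ g j}ᶜ := by
        ext ω
        obtain ⟨i, hi1, hiJ, hσ⟩ := hval ω
        simp only [hC, Set.mem_setOf_eq, Set.mem_compl_iff, hσ, hg.le_iff_le, not_le]
        omega
      rw [this]
      exact (hmeas j hj1 hj.le).compl
  have hCmeas0 : ∀ j, j < J → MeasurableSet (C j) := fun j hj => 𝓕.le (g j) _ (hCmeas j hj)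
  have hd : ∀ j, Integrable (fun ω => X (g (j+1)) ω - X (g j) ω) P :=
    fun j => (hX.integrable _).sub (hX.integrable _)
  have hrep := stopped_rep hg hval X
  have hint : Integrable (fun ω => X (σ ω) ω) P := by
    rw [show (fun ω => X (σ ω) ω) = (fun ω => X (g 0) ω + ∑ j ∈ Finset.range J,
      ({ω' | g (j+1) ≤ σ ω'}.indicator (fun ω' => X (g (j+1)) ω' - X (g j) ω')) ω) from
      funext hrep]
    exact (hX.integrable _).add (integrable_finset_sum _ fun j hj =>
      (hd j).indicator (hCmeas0 j (Finset.mem_range.mp hj)))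
  have hmeas' : Measurable (fun ω => X (σ ω) ω) := by
    rw [show (fun ω => X (σ ω) ω) = (fun ω => X (g 0) ω + ∑ j ∈ Finset.range J,
      ({ω' | g (j+1) ≤ σ ω'}.indicator (fun ω' => X (g (j+1)) ω' - X (g j) ω')) ω) from
      funext hrep]
    apply Measurable.add
    · exact ((hX.stronglyMeasurable _).mono (𝓕.le _)).measurable
    · apply Finset.measurable_sum
      intro j hj
      exact (((hX.stronglyMeasurable _).mono (𝓕.le _)).measurable.sub
        ((hX.stronglyMeasurable _).mono (𝓕.le _)).measurable).indicator
        (hCmeas0 j (Finset.mem_range.mp hj))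
  refine ⟨hint, hmeas', ?_⟩
  have hBm : MeasurableSet B := 𝓕.le (g 0) _ hB
  calc ∫ ω in B, X (σ ω) ω ∂P
      = ∫ ω in B, (X (g 0) ω + ∑ j ∈ Finset.range J,
          ({ω' | g (j+1) ≤ σ ω'}.indicator (fun ω' => X (g (j+1)) ω' - X (g j) ω')) ω) ∂P := by
        exact setIntegral_congr_ae hBm (by filter_upwards with ω _ using hrep ω)
    _ = (∫ ω in B, X (g 0) ω ∂P) + ∑ j ∈ Finset.range J, ∫ ω in B,
          ({ω' | g (j+1) ≤ σ ω'}.indicator (fun ω' => X (g (j+1)) ω' - X (g j) ω')) ω ∂P := by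
        rw [integral_add ((hX.integrable _).integrableOn) (integrable_finset_sum _ fun j hj =>
          ((hd j).indicator (hCmeas0 j (Finset.mem_range.mp hj))).integrableOn),
          integral_finset_sum _ (fun j hj =>
          ((hd j).indicator (hCmeas0 j (Finset.mem_range.mp hj))).integrableOn)]
    _ = ∫ ω in B, X (g 0) ω ∂P := by
        rw [add_eq_left]
        apply Finset.sum_eq_zero
        intro j hj
        have hjJ := Finset.mem_range.mp hj
        rw [setIntegral_indicator (hCmeas0 j hjJ)]
        have hBC : MeasurableSet[𝓕 (g j)] (B ∩ C j) :=
          MeasurableSet.inter (𝓕.mono (hg.monotone (Nat.zero_le j)) _ hB) (hCmeas j hjJ)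
        rw [integral_sub ((hX.integrable _).integrableOn) ((hX.integrable _).integrableOn),
          ← hX.setIntegral_eq (hg.monotone (Nat.le_succ j)) hBC, sub_self]


lemma stopped_tail (hX : Martingale X 𝓕 P) (hg : StrictMono g)
    {T' : ℝ} (hT' : g J ≤ T')
    (hval : ∀ ω, ∃ j, 1 ≤ j ∧ j ≤ J ∧ σ ω = g j)
    (hmeaseq : ∀ j, 1 ≤ j → j ≤ J → MeasurableSet[𝓕 (g j)] {ω | σ ω = g j})
    (hVint : Integrable (fun ω => X (σ ω) ω - X (g 0) ω) P)
    (hVmeas : Measurable (fun ω => X (σ ω) ω - X (g 0) ω))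
    {c : ℝ} (hc : 0 < c) :
    ∫ ω in {ω | c ≤ |X (σ ω) ω - X (g 0) ω|}, |X (σ ω) ω - X (g 0) ω| ∂P
      ≤ ∫ ω in {ω | c ≤ |X (σ ω) ω - X (g 0) ω|}, |X T' ω - X (g 0) ω| ∂P ∧
    (P {ω | c ≤ |X (σ ω) ω - X (g 0) ω|}).toReal ≤ (∫ ω, |X T' ω - X (g 0) ω| ∂P) / c := by
  classical
  set V : Ω → ℝ := fun ω => X (σ ω) ω - X (g 0) ω with hV
  set Hh : Ω → ℝ := fun ω => X T' ω - X (g 0) ω with hHh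
  have hHhint : Integrable Hh P := (hX.integrable _).sub (hX.integrable _)
  set Aset : Set Ω := {ω | c ≤ |V ω|} with hA
  have hAm : MeasurableSet Aset := measurableSet_le measurable_const hVmeas.abs
  set D : ℕ → Ω → ℝ := fun j ω => X (g j) ω - X (g 0) ω with hD
  have hDint : ∀ j, Integrable (D j) P := fun j => (hX.integrable _).sub (hX.integrable _)
  have hDmeasj : ∀ j, StronglyMeasurable[𝓕 (g j)] (D j) := fun j =>
    (hX.stronglyMeasurable _).sub
      ((hX.stronglyMeasurable _).mono (𝓕.mono (hg.monotone (Nat.zero_le j))))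
  set E : ℕ → Set Ω := fun j => {ω | c ≤ |D j ω|} ∩ {ω | σ ω = g j} with hE
  have hEmeasj : ∀ j, 1 ≤ j → j ≤ J → MeasurableSet[𝓕 (g j)] (E j) := by
    intro j h1 h2
    have hm1 : MeasurableSet[𝓕 (g j)] {ω | c ≤ |D j ω|} := by
      letI : MeasurableSpace Ω := 𝓕 (g j)
      exact measurableSet_le measurable_const (hDmeasj j).measurable.abs
    exact hm1.inter (hmeaseq j h1 h2)
  have hEmeas0 : ∀ j, 1 ≤ j → j ≤ J → MeasurableSet (E j) := fun j h1 h2 =>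
    𝓕.le (g j) _ (hEmeasj j h1 h2)
  -- pointwise: 1_A |V| = ∑_j 1_{E j} |D j|
  have hpt : ∀ ω, Aset.indicator (fun ω => |V ω|) ω
      = ∑ j ∈ Finset.Icc 1 J, (E j).indicator (fun ω => |D j ω|) ω := by
    intro ω
    obtain ⟨i, hi1, hiJ, hσ⟩ := hval ω
    have hVD : V ω = D i ω := by simp only [hV, hD, hσ]
    rw [Finset.sum_eq_single i]
    · by_cases h : ω ∈ Aset
      · have h' : c ≤ |D i ω| := by rw [← hVD]; exact h
        rw [Set.indicator_of_mem h, Set.indicator_of_mem (show ω ∈ E i from ⟨h', hσ⟩)]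
        exact congrArg abs hVD
      · have h' : ω ∉ E i := by
          rintro ⟨h1, -⟩
          exact h (show ω ∈ Aset from by rw [hA]; simp only [Set.mem_setOf_eq, hVD]; exact h1)
        rw [Set.indicator_of_notMem h, Set.indicator_of_notMem h']
    · intro j hj hne
      apply Set.indicator_of_notMem
      rintro ⟨-, h2⟩
      exact hne (hg.injective (hσ.symm.trans h2)).symm
    · intro h
      exact absurd (Finset.mem_Icc.2 ⟨hi1, hiJ⟩) h
  have key : ∫ ω in Aset, |V ω| ∂P ≤ ∫ ω in Aset, |Hh ω| ∂P := by
    have h1 : ∫ ω in Aset, |V ω| ∂P = ∑ j ∈ Finset.Icc 1 J, ∫ ω in E j, |D j ω| ∂P := by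
      rw [← integral_indicator hAm]
      rw [show (fun ω => Aset.indicator (fun ω => |V ω|) ω)
        = fun ω => ∑ j ∈ Finset.Icc 1 J, (E j).indicator (fun ω => |D j ω|) ω from funext hpt]
      rw [integral_finset_sum _ (fun j hj => ((hDint j).abs).indicator
        (hEmeas0 j (Finset.mem_Icc.mp hj).1 (Finset.mem_Icc.mp hj).2))]
      exact Finset.sum_congr rfl fun j hj => integral_indicator
        (hEmeas0 j (Finset.mem_Icc.mp hj).1 (Finset.mem_Icc.mp hj).2)
    set HH : Ω → ℝ := (fun ω => X T' ω) - (fun ω => X (g 0) ω) with hHH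
    have hHhHH : Hh = HH := rfl
    set Habs : Ω → ℝ := fun ω => |Hh ω| with hHabs
    have hHabsint : Integrable Habs P := hHhint.abs
    have h2 : ∀ j, 1 ≤ j → j ≤ J → ∫ ω in E j, |D j ω| ∂P ≤ ∫ ω in E j, |Hh ω| ∂P := by
      intro j h1j h2j
      have hgjT : g j ≤ T' := (hg.monotone h2j).trans hT'
      have e1 : P[fun ω => X T' ω | 𝓕 (g j)] =ᵐ[P] X (g j) := hX.condExp_ae_eq hgjT
      have e2 : P[fun ω => X (g 0) ω | 𝓕 (g j)] = fun ω => X (g 0) ω :=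
        condExp_of_stronglyMeasurable (𝓕.le _)
          ((hX.stronglyMeasurable _).mono (𝓕.mono (hg.monotone (Nat.zero_le j))))
          (hX.integrable _)
      have e3 := condExp_sub (m := 𝓕 (g j)) (μ := P) (hX.integrable T') (hX.integrable (g 0))
      have hup : P[HH | 𝓕 (g j)] ≤ᵐ[P] P[Habs | 𝓕 (g j)] :=
        condExp_mono (hHhHH ▸ hHhint) hHabsint
          (Filter.Eventually.of_forall fun ω => by
            rw [← hHhHH]; exact le_abs_self _)
      have hneg : P[-HH | 𝓕 (g j)] ≤ᵐ[P] P[Habs | 𝓕 (g j)] :=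
        condExp_mono (hHhHH ▸ hHhint).neg hHabsint
          (Filter.Eventually.of_forall fun ω => by
            show -HH ω ≤ |Hh ω|
            rw [← hHhHH]; exact neg_le_abs _)
      have hneg2 := condExp_neg (μ := P) (m := 𝓕 (g j)) HH
      have habs : (fun ω => |D j ω|) ≤ᵐ[P] P[Habs | 𝓕 (g j)] := by
        filter_upwards [e1, e3, hup, hneg, hneg2] with ω he1 he3 hu hn hn2
        have hDj : D j ω = (P[HH | 𝓕 (g j)]) ω := by
          rw [hHH, he3]
          simp only [Pi.sub_apply, he1]
          rw [e2]
        rw [hDj] at *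
        rw [abs_le]
        refine ⟨?_, hu⟩
        have : -(P[HH | 𝓕 (g j)]) ω ≤ (P[Habs | 𝓕 (g j)]) ω := by
          rw [← Pi.neg_apply, ← hn2]
          exact hn
        linarith
      calc ∫ ω in E j, |D j ω| ∂P
          ≤ ∫ ω in E j, (P[Habs | 𝓕 (g j)]) ω ∂P :=
            setIntegral_mono_ae ((hDint j).abs).integrableOn
              integrable_condExp.integrableOn habs
        _ = ∫ ω in E j, |Hh ω| ∂P :=
            setIntegral_condExp (𝓕.le _) hHabsint (hEmeasj j h1j h2j)
    have h3 : ∑ j ∈ Finset.Icc 1 J, ∫ ω in E j, |Hh ω| ∂P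
        = ∫ ω in ⋃ j ∈ Finset.Icc 1 J, E j, |Hh ω| ∂P := by
      rw [integral_biUnion_finset _ (fun j hj => hEmeas0 j (Finset.mem_Icc.mp hj).1
        (Finset.mem_Icc.mp hj).2)]
      · intro j hj k hk hjk
        simp only [Function.onFun]
        rw [Set.disjoint_left]
        rintro ω ⟨-, hj1⟩ ⟨-, hk1⟩
        exact hjk (hg.injective (hj1.symm.trans hk1))
      · exact fun j hj => hHhint.abs.integrableOn
    have h4 : (⋃ j ∈ Finset.Icc 1 J, E j) ⊆ Aset := by
      intro ω hω
      simp only [Set.mem_iUnion] at hω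
      obtain ⟨j, hj, hcj, hσj⟩ := hω
      obtain ⟨i, hi1, hiJ, hσ⟩ := hval ω
      have hij : i = j := hg.injective (hσ.symm.trans hσj)
      subst hij
      show c ≤ |V ω|
      simpa only [hV, hσ, hD, Set.mem_setOf_eq] using hcj
    calc ∫ ω in Aset, |V ω| ∂P = ∑ j ∈ Finset.Icc 1 J, ∫ ω in E j, |D j ω| ∂P := h1
      _ ≤ ∑ j ∈ Finset.Icc 1 J, ∫ ω in E j, |Hh ω| ∂P :=
          Finset.sum_le_sum fun j hj => h2 j (Finset.mem_Icc.mp hj).1 (Finset.mem_Icc.mp hj).2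
      _ = ∫ ω in ⋃ j ∈ Finset.Icc 1 J, E j, |Hh ω| ∂P := h3
      _ ≤ ∫ ω in Aset, |Hh ω| ∂P := by
          apply setIntegral_mono_set hHhint.abs.integrableOn
            (Filter.Eventually.of_forall fun ω => abs_nonneg _)
          exact HasSubset.Subset.eventuallyLE h4
  have hAle : ∫ ω in Aset, |Hh ω| ∂P ≤ ∫ ω, |Hh ω| ∂P :=
    setIntegral_le_integral hHhint.abs (Filter.Eventually.of_forall fun ω => abs_nonneg _)
  constructor
  · exact key
  · have markov : c * (P Aset).toReal ≤ ∫ ω in Aset, |V ω| ∂P := by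
      have := setIntegral_mono_on (integrableOn_const (measure_ne_top _ _))
        hVint.abs.integrableOn hAm (fun ω hω => hω)
      rwa [setIntegral_const, smul_eq_mul, mul_comm (P.real Aset) c] at this
    rw [le_div_iff₀ hc, mul_comm]
    exact markov.trans (key.trans hAle)

end Grid

section Key

variable [IsProbabilityMeasure P]

/-- The core comparison step at a fixed time `t`. -/
lemma key_step
    {T t ε : ℝ} (ht : 0 ≤ t) (htT : t < T) (hε : 0 < ε)
    {X : ℝ → Ω → ℝ} (hX : Martingale X 𝓕 P)
    {δ : ℝ → Ω → ℝ}
    (hadp : ∀ s, StronglyMeasurable[𝓕 s] (δ s))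
    (hrc : ∀ ω x, ContinuousWithinAt (fun s => δ s ω) (Set.Ici x) x)
    {μω : Ω → Measure ℝ} (hatomless : ∀ ω x, μω ω {x} = 0)
    {G H : ℝ → Ω → ℝ}
    (hGint : ∀ ω, IntegrableOn (fun s => G s ω) (Set.Ioc t T) (μω ω))
    (hHint : ∀ ω, IntegrableOn (fun s => H s ω) (Set.Ioc t T) (μω ω))
    (hsign : ∀ ω s, s ∈ Set.Ioo t T → δ s ω ≤ -ε → H s ω ≤ G s ω)
    (heq : ∀ᵐ ω ∂P, δ T ω = 0 ∧ ∀ u ∈ Set.Icc t T,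
      X u ω - X t ω = δ u ω - δ t ω
        + ((∫ s in Set.Ioc t u, G s ω ∂(μω ω)) - ∫ s in Set.Ioc t u, H s ω ∂(μω ω))) :
    P {ω | δ t ω < -(2*ε)} = 0 := by
  classical
  -- the hitting "time"
  set Sset : Ω → Set ℝ := fun ω => {s | s ∈ Set.Icc t T ∧ -ε < δ s ω} ∪ {T} with hSdef
  set τ : Ω → ℝ := fun ω => sInf (Sset ω) with hτdef
  have hSne : ∀ ω, (Sset ω).Nonempty := fun ω => ⟨T, Or.inr rfl⟩
  have hSbd : ∀ ω, BddBelow (Sset ω) := by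
    intro ω
    refine ⟨t, fun x hx => ?_⟩
    rcases hx with hx | hx
    · exact hx.1.1
    · rw [hx]; exact htT.le
  have hτ_ge : ∀ ω, t ≤ τ ω := by
    intro ω
    apply le_csInf (hSne ω)
    intro x hx
    rcases hx with hx | hx
    · exact hx.1.1
    · rw [hx]; exact htT.le
  have hτ_le : ∀ ω, τ ω ≤ T := fun ω => csInf_le (hSbd ω) (Or.inr rfl)
  have hbefore : ∀ ω s, t ≤ s → s < τ ω → δ s ω ≤ -ε := by
    intro ω s hts hsτ
    by_contra hcon
    push_neg at hcon
    have hmem : s ∈ Sset ω := Or.inl ⟨⟨hts, (hsτ.trans_le (hτ_le ω)).le⟩, hcon⟩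
    exact absurd (csInf_le (hSbd ω) hmem) (not_le.2 hsτ)
  -- the dyadic-type grids
  set mesh : ℕ → ℝ := fun m => (T - t) / (m + 1) with hmesh
  have hmesh_pos : ∀ m, 0 < mesh m := by
    intro m
    apply div_pos (sub_pos.2 htT)
    positivity
  set Grid : ℕ → ℕ → ℝ := fun m j => t + j * mesh m with hGriddef
  have hGrid0 : ∀ m, Grid m 0 = t := by intro m; simp [hGriddef]
  have hGridsucc : ∀ m j, Grid m (j + 1) = Grid m j + mesh m := by
    intro m j
    simp only [hGriddef]
    push_cast
    ring
  have hGridsm : ∀ m, StrictMono (Grid m) := by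
    intro m a b hab
    simp only [hGriddef]
    have : (a : ℝ) < b := by exact_mod_cast hab
    nlinarith [hmesh_pos m]
  have hGridJ : ∀ m, Grid m (m + 1) = T := by
    intro m
    simp only [hGriddef, hmesh]
    push_cast
    field_simp
    ring
  have hGridmem : ∀ m j, j ≤ m + 1 → Grid m j ∈ Set.Icc t T := by
    intro m j hj
    constructor
    · rw [← hGrid0 m]; exact (hGridsm m).monotone (Nat.zero_le j)
    · rw [← hGridJ m]; exact (hGridsm m).monotone hj
  -- the discretized stopping times
  have hQex : ∀ m ω, ∃ j, (1 ≤ j ∧ τ ω < Grid m j) ∨ j = m + 1 := fun m ω => ⟨m + 1, Or.inr rfl⟩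
  set jm : ℕ → Ω → ℕ := fun m ω => Nat.find (hQex m ω) with hjmdef
  set σ : ℕ → Ω → ℝ := fun m ω => Grid m (jm m ω) with hσdef
  have hjm_le : ∀ m ω, jm m ω ≤ m + 1 := fun m ω => Nat.find_min' (hQex m ω) (Or.inr rfl)
  have hjm_ge : ∀ m ω, 1 ≤ jm m ω := by
    intro m ω
    by_contra hcon
    have h0 : jm m ω = 0 := by omega
    have hspec : (1 ≤ jm m ω ∧ τ ω < Grid m (jm m ω)) ∨ jm m ω = m + 1 :=
      Nat.find_spec (hQex m ω)
    rw [h0] at hspec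
    rcases hspec with ⟨h1, -⟩ | h2 <;> omega
  have hval : ∀ m ω, ∃ j, 1 ≤ j ∧ j ≤ m + 1 ∧ σ m ω = Grid m j :=
    fun m ω => ⟨jm m ω, hjm_ge m ω, hjm_le m ω, rfl⟩
  have hσmem : ∀ m ω, σ m ω ∈ Set.Icc t T := fun m ω => hGridmem m _ (hjm_le m ω)
  have hστ_eqT : ∀ m ω, τ ω = T → σ m ω = T := by
    intro m ω hτT
    have hjmeq : jm m ω = m + 1 := by
      have hspec : (1 ≤ jm m ω ∧ τ ω < Grid m (jm m ω)) ∨ jm m ω = m + 1 :=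
        Nat.find_spec (hQex m ω)
      rcases hspec with ⟨h1, h2⟩ | h3
      · by_contra hne
        have hlt : jm m ω < m + 1 := lt_of_le_of_ne (hjm_le m ω) hne
        have : Grid m (jm m ω) < Grid m (m + 1) := hGridsm m hlt
        rw [hGridJ m] at this
        rw [hτT] at h2
        linarith
      · exact h3
    show Grid m (jm m ω) = T
    rw [hjmeq, hGridJ]
  have hτσ_le : ∀ m ω, τ ω ≤ σ m ω := by
    intro m ω
    have hspec : (1 ≤ jm m ω ∧ τ ω < Grid m (jm m ω)) ∨ jm m ω = m + 1 :=
      Nat.find_spec (hQex m ω)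
    rcases hspec with ⟨h1, h2⟩ | h3
    · exact h2.le
    · show τ ω ≤ Grid m (jm m ω); rw [h3, hGridJ]; exact hτ_le ω
  have hτσ : ∀ m ω, τ ω < T → τ ω < σ m ω := by
    intro m ω hτT
    have hspec : (1 ≤ jm m ω ∧ τ ω < Grid m (jm m ω)) ∨ jm m ω = m + 1 :=
      Nat.find_spec (hQex m ω)
    rcases hspec with ⟨h1, h2⟩ | h3
    · exact h2
    · show τ ω < Grid m (jm m ω); rw [h3, hGridJ]; exact hτT
  have hσub : ∀ m ω, τ ω < T → σ m ω ≤ τ ω + mesh m := by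
    intro m ω hτT
    have hex2 : ∃ j, τ ω < Grid m j := ⟨m + 1, by rw [hGridJ]; exact hτT⟩
    set js := Nat.find hex2 with hjs
    have hspec2 : τ ω < Grid m js := Nat.find_spec hex2
    have hjs1 : 1 ≤ js := by
      by_contra hcon
      have h0 : js = 0 := by omega
      rw [h0, hGrid0] at hspec2
      exact absurd (hτ_ge ω) (not_le.2 hspec2)
    have hjmjs : jm m ω ≤ js := Nat.find_min' (hQex m ω) (Or.inl ⟨hjs1, hspec2⟩)
    have h1 : σ m ω ≤ Grid m js := (hGridsm m).monotone hjmjs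
    have h2 : Grid m (js - 1) ≤ τ ω := by
      have := Nat.find_min hex2 (show js - 1 < js by omega)
      push_neg at this
      exact this
    have h3 : Grid m js = Grid m (js - 1) + mesh m := by
      conv_lhs => rw [show js = (js - 1) + 1 by omega]
      exact hGridsucc m _
    rw [h3] at h1
    linarith
  -- measurability of the discretized stopping times
  have hτlt : ∀ u, t < u → u ≤ T → MeasurableSet[𝓕 u] {ω | τ ω < u} := by
    intro u htu huT
    have hchar : {ω | τ ω < u}
        = ⋃ q : {q : ℚ // t < (q : ℝ) ∧ (q : ℝ) < u}, {ω | -ε < δ (q : ℝ) ω} := by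
      ext ω
      simp only [Set.mem_setOf_eq, Set.mem_iUnion]
      constructor
      · intro hτu
        obtain ⟨x, hx, hxu⟩ := exists_lt_of_csInf_lt (hSne ω) hτu
        rcases hx with hx | hx
        · -- x is a point where δ > -ε ; move slightly to the right to find a rational
          have hcw := (hrc ω x).tendsto
          have hev1 : ∀ᶠ s in 𝓝[Set.Ici x] x, -ε < δ s ω :=
            hcw.eventually (eventually_gt_nhds hx.2)
          have hev2 : ∀ᶠ s in 𝓝[Set.Ici x] x, s < u :=
            eventually_nhdsWithin_of_eventually_nhds (eventually_lt_nhds hxu)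
          obtain ⟨v, hv, hsub⟩ := (nhdsGE_basis_of_exists_gt ⟨x + 1, lt_add_one x⟩).eventually_iff.1
            (hev1.and hev2)
          obtain ⟨q, hq1, hq2⟩ := exists_rat_btwn (lt_min hv hxu)
          have hqmem : (q : ℝ) ∈ Set.Ico x v := ⟨hq1.le, hq2.trans_le (min_le_left _ _)⟩
          obtain ⟨hq3, hq4⟩ := hsub hqmem
          exact ⟨⟨q, hx.1.1.trans_lt hq1, hq4⟩, hq3⟩
        · rw [Set.mem_singleton_iff] at hx
          rw [hx] at hxu
          exact absurd huT (not_le.2 hxu)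
      · rintro ⟨⟨q, hq1, hq2⟩, hq3⟩
        apply lt_of_le_of_lt _ hq2
        apply csInf_le (hSbd ω)
        exact Or.inl ⟨⟨hq1.le, hq2.le.trans huT⟩, hq3⟩
    rw [hchar]
    apply MeasurableSet.iUnion
    rintro ⟨q, hq1, hq2⟩
    apply 𝓕.mono hq2.le
    letI : MeasurableSpace Ω := 𝓕 (q : ℝ)
    exact measurableSet_lt measurable_const (hadp (q : ℝ)).measurable
  have hσle : ∀ m i, 1 ≤ i → i ≤ m + 1 → MeasurableSet[𝓕 (Grid m i)] {ω | σ m ω ≤ Grid m i} := by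
    intro m i h1 h2
    rcases eq_or_lt_of_le h2 with rfl | hlt
    · have : {ω | σ m ω ≤ Grid m (m + 1)} = Set.univ := by
        ext ω
        simp only [Set.mem_setOf_eq, Set.mem_univ, iff_true, hσdef]
        exact (hGridsm m).monotone (hjm_le m ω)
      rw [this]; exact MeasurableSet.univ
    · have hchar : {ω | σ m ω ≤ Grid m i} = {ω | τ ω < Grid m i} := by
        ext ω
        simp only [Set.mem_setOf_eq, hσdef, (hGridsm m).le_iff_le]
        constructor
        · intro hji
          have hspec : (1 ≤ jm m ω ∧ τ ω < Grid m (jm m ω)) ∨ jm m ω = m + 1 :=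
            Nat.find_spec (hQex m ω)
          rcases hspec with ⟨hh1, hh2⟩ | hh3
          · exact hh2.trans_le ((hGridsm m).monotone hji)
          · omega
        · intro hτi
          exact Nat.find_min' (hQex m ω) (Or.inl ⟨h1, hτi⟩)
      rw [hchar]
      apply hτlt
      · rw [← hGrid0 m]; exact hGridsm m h1
      · rw [← hGridJ m]; exact ((hGridsm m).monotone h2)
  have hσeq : ∀ m i, 1 ≤ i → i ≤ m + 1 → MeasurableSet[𝓕 (Grid m i)] {ω | σ m ω = Grid m i} := by
    intro m i h1 h2
    have hinj := (hGridsm m).injective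
    rcases eq_or_lt_of_le h1 with rfl | h1'
    · have : {ω | σ m ω = Grid m 1} = {ω | σ m ω ≤ Grid m 1} := by
        ext ω
        simp only [Set.mem_setOf_eq, hσdef]
        constructor
        · intro h; rw [h]
        · intro h
          have := ((hGridsm m).le_iff_le).1 h
          have h1ω := hjm_ge m ω
          congr 1
          omega
      rw [this]
      exact hσle m 1 le_rfl h2
    · have : {ω | σ m ω = Grid m i}
          = {ω | σ m ω ≤ Grid m i} \ {ω | σ m ω ≤ Grid m (i - 1)} := by
        ext ω
        simp only [Set.mem_setOf_eq, Set.mem_diff, hσdef, (hGridsm m).le_iff_le]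
        constructor
        · intro h
          have := hinj h
          omega
        · rintro ⟨ha, hb⟩
          have : jm m ω = i := by omega
          rw [this]
      rw [this]
      apply MeasurableSet.diff (hσle m i h1 h2)
      apply 𝓕.mono ((hGridsm m).monotone (show i - 1 ≤ i by omega))
      exact hσle m (i - 1) (by omega) (by omega)
  -- target event
  set B : Set Ω := {ω | δ t ω < -(2*ε)} with hBdef
  have hBmeasF : MeasurableSet[𝓕 t] B := by
    letI : MeasurableSpace Ω := 𝓕 t
    exact measurableSet_lt (hadp t).measurable measurable_const
  have hBmeas : MeasurableSet B := 𝓕.le t _ hBmeasF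
  -- the stopped martingale increments
  set Vm : ℕ → Ω → ℝ := fun m ω => X (σ m ω) ω - X t ω with hVmdef
  set L : Ω → ℝ := fun ω => δ (τ ω) ω - δ t ω
    + ((∫ s in Set.Ioc t (τ ω), G s ω ∂(μω ω)) - ∫ s in Set.Ioc t (τ ω), H s ω ∂(μω ω))
    with hLdef
  have hopt : ∀ m, Integrable (fun ω => X (σ m ω) ω) P ∧ Measurable (fun ω => X (σ m ω) ω) ∧
      ∫ ω in B, X (σ m ω) ω ∂P = ∫ ω in B, X (Grid m 0) ω ∂P := by
    intro m
    exact optional_stopping_fin hX (hGridsm m) (hval m) (hσle m) ((hGrid0 m).symm ▸ hBmeasF)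
  have hVint : ∀ m, Integrable (Vm m) P := fun m => ((hopt m).1).sub (hX.integrable t)
  have hVmeas : ∀ m, Measurable (Vm m) := fun m => ((hopt m).2.1).sub
    (((hX.stronglyMeasurable t).mono (𝓕.le t)).measurable)
  have hzero : ∀ m, ∫ ω in B, Vm m ω ∂P = 0 := by
    intro m
    have h1 := (hopt m).2.2
    rw [hGrid0 m] at h1
    show ∫ ω in B, (X (σ m ω) ω - X t ω) ∂P = 0
    rw [integral_sub ((hopt m).1.integrableOn) ((hX.integrable t).integrableOn), h1, sub_self]
  -- pathwise convergence of the stopped times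
  have hmesh0 : Tendsto mesh atTop (𝓝 0) := by
    have h := tendsto_one_div_add_atTop_nhds_zero_nat.const_mul (T - t)
    rw [mul_zero] at h
    apply h.congr
    intro m
    rw [hmesh, mul_one_div]
  have hσtend : ∀ ω, Tendsto (fun m => σ m ω) atTop (𝓝 (τ ω)) := by
    intro ω
    rcases eq_or_lt_of_le (hτ_le ω) with hτT | hτT
    · have hconst : ∀ m, σ m ω = τ ω := fun m => by rw [hστ_eqT m ω hτT, hτT]
      exact tendsto_const_nhds.congr fun m => (hconst m).symm
    · have hup : ∀ m, σ m ω ≤ τ ω + mesh m := fun m => hσub m ω hτT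
      have h2 : Tendsto (fun m => τ ω + mesh m) atTop (𝓝 (τ ω)) := by
        have h3 := (tendsto_const_nhds (x := τ ω) (f := atTop (α := ℕ))).add hmesh0
        rwa [add_zero] at h3
      exact tendsto_of_tendsto_of_tendsto_of_le_of_le tendsto_const_nhds h2
        (fun m => hτσ_le m ω) hup
  have hδσtend : ∀ ω, Tendsto (fun m => δ (σ m ω) ω) atTop (𝓝 (δ (τ ω) ω)) := by
    intro ω
    have h := (hrc ω (τ ω)).tendsto
    refine h.comp ?_
    rw [tendsto_nhdsWithin_iff]
    exact ⟨hσtend ω, Filter.Eventually.of_forall fun m => hτσ_le m ω⟩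
  have hδτ_ge : ∀ ω, δ T ω = 0 → -ε ≤ δ (τ ω) ω := by
    intro ω hδT
    rcases eq_or_lt_of_le (hτ_le ω) with hτT | hτT
    · rw [hτT, hδT]; linarith
    · have hchoice : ∀ k : ℕ, ∃ x ∈ Sset ω, x < τ ω + 1/(k+1) := by
        intro k
        apply exists_lt_of_csInf_lt (hSne ω)
        have h2 : (0:ℝ) < 1/((k:ℝ)+1) := by positivity
        linarith
      choose u hu hult using hchoice
      have hulow : ∀ k, τ ω ≤ u k := fun k => csInf_le (hSbd ω) (hu k)
      have hutend : Tendsto u atTop (𝓝 (τ ω)) := by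
        have h2 : Tendsto (fun k : ℕ => τ ω + 1/((k:ℝ)+1)) atTop (𝓝 (τ ω)) := by
          have h3 := (tendsto_const_nhds (x := τ ω) (f := atTop (α := ℕ))).add
            tendsto_one_div_add_atTop_nhds_zero_nat
          rwa [add_zero] at h3
        exact tendsto_of_tendsto_of_tendsto_of_le_of_le tendsto_const_nhds h2 hulow
          fun k => (hult k).le
      have huδ : Tendsto (fun k => δ (u k) ω) atTop (𝓝 (δ (τ ω) ω)) := by
        refine (hrc ω (τ ω)).tendsto.comp ?_
        rw [tendsto_nhdsWithin_iff]
        exact ⟨hutend, Filter.Eventually.of_forall hulow⟩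
      obtain ⟨K, hK⟩ := exists_nat_one_div_lt (sub_pos.2 hτT)
      apply ge_of_tendsto huδ
      filter_upwards [eventually_ge_atTop K] with k hk
      have h1k : 1/((k:ℝ)+1) ≤ 1/((K:ℝ)+1) := by
        apply one_div_le_one_div_of_le (by positivity)
        have : (K:ℝ) ≤ (k:ℝ) := by exact_mod_cast hk
        linarith
      have hukT : u k < T := by
        have := hult k
        linarith
      rcases hu k with hmem | hmem
      · exact hmem.2.le
      · rw [Set.mem_singleton_iff] at hmem
        rw [hmem] at hukT
        linarith
  -- convergence of the pathwise integrals
  have hIconv : ∀ (F : ℝ → Ω → ℝ), (∀ ω, IntegrableOn (fun s => F s ω) (Set.Ioc t T) (μω ω)) →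
      ∀ ω, Tendsto (fun m => ∫ s in Set.Ioc t (σ m ω), F s ω ∂(μω ω)) atTop
        (𝓝 (∫ s in Set.Ioc t (τ ω), F s ω ∂(μω ω))) := by
    intro F hFint ω
    have hsub1 : Set.Ioc t (τ ω) ⊆ Set.Ioc t T := Set.Ioc_subset_Ioc le_rfl (hτ_le ω)
    have hsub2 : ∀ m, Set.Ioc (τ ω) (σ m ω) ⊆ Set.Ioc t T :=
      fun m => Set.Ioc_subset_Ioc (hτ_ge ω) (hσmem m ω).2
    have hsplit : ∀ m, ∫ s in Set.Ioc t (σ m ω), F s ω ∂(μω ω)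
        = (∫ s in Set.Ioc t (τ ω), F s ω ∂(μω ω))
          + ∫ s in Set.Ioc (τ ω) (σ m ω), F s ω ∂(μω ω) := by
      intro m
      rw [← setIntegral_union (Set.Ioc_disjoint_Ioc_of_le le_rfl) measurableSet_Ioc
        ((hFint ω).mono_set hsub1) ((hFint ω).mono_set (hsub2 m)),
        Set.Ioc_union_Ioc_eq_Ioc (hτ_ge ω) (hτσ_le m ω)]
    have hrem : Tendsto (fun m => ∫ s in Set.Ioc (τ ω) (σ m ω), F s ω ∂(μω ω)) atTop (𝓝 0) := by
      have hDCT := tendsto_integral_of_dominated_convergence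
        (μ := (μω ω).restrict (Set.Ioc t T))
        (F := fun m s => (Set.Ioc (τ ω) (σ m ω)).indicator (fun s' => F s' ω) s)
        (f := fun _ => (0:ℝ)) (bound := fun s => ‖F s ω‖)
        (fun m => ((hFint ω).aestronglyMeasurable.indicator measurableSet_Ioc))
        ((hFint ω).norm)
        (fun m => Filter.Eventually.of_forall fun s => norm_indicator_le_norm_self _ _)
        ?_
      · rw [integral_zero] at hDCT
        apply hDCT.congr
        intro m
        rw [integral_indicator measurableSet_Ioc, Measure.restrict_restrict measurableSet_Ioc,
          Set.inter_eq_self_of_subset_left (hsub2 m)]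
      · filter_upwards [ae_restrict_mem measurableSet_Ioc] with s hsmem
        rcases lt_or_ge (τ ω) s with hcase | hcase
        · have hτT : τ ω < T := lt_of_lt_of_le hcase hsmem.2
          have hev : ∀ᶠ m in atTop, σ m ω < s := by
            have hm2 : ∀ᶠ m in atTop, mesh m < s - τ ω :=
              hmesh0.eventually_lt_const (by linarith)
            filter_upwards [hm2] with m hm
            have := hσub m ω hτT
            linarith
          apply tendsto_const_nhds.congr'
          filter_upwards [hev] with m hm
          exact (Set.indicator_of_notMem (fun hmem' => absurd hmem'.2 (not_le.2 hm)) _).symm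
        · apply tendsto_const_nhds.congr
          intro m
          exact (Set.indicator_of_notMem (fun hmem' => absurd hmem'.1 (not_lt.2 hcase)) _).symm
    have hfin := (tendsto_const_nhds
      (x := ∫ s in Set.Ioc t (τ ω), F s ω ∂(μω ω)) (f := atTop (α := ℕ))).add hrem
    rw [add_zero] at hfin
    exact hfin.congr fun m => (hsplit m).symm
  -- pathwise limit of the stopped increments
  have hVlim : ∀ᵐ ω ∂P, Tendsto (fun m => Vm m ω) atTop (𝓝 (L ω)) ∧ (ω ∈ B → ε ≤ L ω) := by
    filter_upwards [heq] with ω hω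
    obtain ⟨hδT, heqω⟩ := hω
    constructor
    · have h1 := (hδσtend ω).sub (tendsto_const_nhds (x := δ t ω) (f := atTop (α := ℕ)))
      have h2 := (hIconv G hGint ω).sub (hIconv H hHint ω)
      have h3 := h1.add h2
      apply h3.congr
      intro m
      exact (heqω (σ m ω) (hσmem m ω)).symm
    · intro hB
      have hδτ := hδτ_ge ω hδT
      have hGH : 0 ≤ (∫ s in Set.Ioc t (τ ω), G s ω ∂(μω ω))
          - ∫ s in Set.Ioc t (τ ω), H s ω ∂(μω ω) := by
        have hsub1 : Set.Ioc t (τ ω) ⊆ Set.Ioc t T := Set.Ioc_subset_Ioc le_rfl (hτ_le ω)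
        rw [← integral_sub ((hGint ω).mono_set hsub1) ((hHint ω).mono_set hsub1)]
        apply setIntegral_nonneg_ae measurableSet_Ioc
        have hnull : ∀ᵐ s ∂(μω ω), s ≠ τ ω := by
          rw [ae_iff]
          have hset : {s : ℝ | ¬s ≠ τ ω} = {τ ω} := by ext s; simp
          rw [hset]
          exact hatomless ω (τ ω)
        filter_upwards [hnull] with s hs hmem
        have hsτ : s < τ ω := lt_of_le_of_ne hmem.2 hs
        have hsT : s ∈ Set.Ioo t T := ⟨hmem.1, lt_of_lt_of_le hsτ (hτ_le ω)⟩
        have hδs : δ s ω ≤ -ε := hbefore ω s hmem.1.le hsτ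
        exact sub_nonneg.2 (hsign ω s hsT hδs)
      have hδt : δ t ω < -(2*ε) := hB
      show ε ≤ δ (τ ω) ω - δ t ω + _
      linarith
  -- conclude by contradiction
  by_contra hPB
  have hPBpos : 0 < (P B).toReal := ENNReal.toReal_pos hPB (measure_ne_top _ _)
  set ρ := ε * (P B).toReal / 2 with hρdef
  have hρpos : 0 < ρ := by positivity
  have hHhint : Integrable (fun ω => X T ω - X t ω) P := (hX.integrable T).sub (hX.integrable t)
  have hHhmeas : Measurable (fun ω => X T ω - X t ω) :=
    (((hX.stronglyMeasurable T).mono (𝓕.le T)).measurable).sub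
      (((hX.stronglyMeasurable t).mono (𝓕.le t)).measurable)
  obtain ⟨δ₀, hδ₀pos, habsc⟩ := abscont hHhmeas hHhint hρpos
  set I₀ := ∫ ω, |X T ω - X t ω| ∂P with hI₀def
  have hI₀nonneg : 0 ≤ I₀ := integral_nonneg fun ω => abs_nonneg _
  set c := max ε (I₀ / δ₀ + 1) with hcdef
  have hcpos : 0 < c := lt_of_lt_of_le hε (le_max_left _ _)
  have hcε : ε ≤ c := le_max_left _ _
  have hI₀c : I₀ / c < δ₀ := by
    rw [div_lt_iff₀ hcpos]
    have h1 : I₀/δ₀ + 1 ≤ c := le_max_right _ _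
    have h2 : δ₀ * (I₀/δ₀ + 1) ≤ δ₀ * c := mul_le_mul_of_nonneg_left h1 hδ₀pos.le
    have h3 : δ₀ * (I₀/δ₀ + 1) = I₀ + δ₀ := by field_simp
    linarith
  have htail : ∀ m, ∫ ω in {ω | c ≤ |Vm m ω|}, |Vm m ω| ∂P ≤ ρ := by
    intro m
    have hst := stopped_tail hX (hGridsm m) (le_of_eq (hGridJ m)) (hval m) (hσeq m)
      (by rw [hGrid0 m]; exact hVint m) (by rw [hGrid0 m]; exact hVmeas m) hcpos
    rw [hGrid0 m] at hst
    obtain ⟨h1, h2⟩ := hst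
    have hAm : MeasurableSet {ω | c ≤ |Vm m ω|} :=
      measurableSet_le measurable_const (hVmeas m).abs
    have hsmall : (P {ω | c ≤ |Vm m ω|}).toReal < δ₀ := lt_of_le_of_lt h2 hI₀c
    exact h1.trans (habsc _ hAm hsmall)
  have hLmeas : AEStronglyMeasurable L P :=
    aestronglyMeasurable_of_tendsto_ae atTop (fun m => (hVmeas m).aestronglyMeasurable)
      (hVlim.mono fun ω h => h.1)
  have hclampconv : Tendsto (fun m => ∫ ω in B, clamp c (Vm m ω) ∂P) atTop
      (𝓝 (∫ ω in B, clamp c (L ω) ∂P)) := by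
    apply tendsto_integral_of_dominated_convergence (bound := fun _ => c)
    · exact fun m => ((continuous_clamp c).comp_aestronglyMeasurable
        (hVmeas m).aestronglyMeasurable).restrict
    · exact integrable_const c
    · intro m
      apply ae_restrict_of_ae
      filter_upwards with ω
      rw [Real.norm_eq_abs]
      exact abs_clamp_le hcpos.le _
    · apply ae_restrict_of_ae
      filter_upwards [hVlim] with ω h
      exact (((continuous_clamp c).tendsto _).comp h.1 : _)
  have hbound : ∀ m, |∫ ω in B, clamp c (Vm m ω) ∂P| ≤ ρ := by
    intro m
    have hintclamp : IntegrableOn (fun ω => clamp c (Vm m ω)) B P := by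
      apply Integrable.integrableOn
      apply Integrable.mono' (integrable_const c)
        ((continuous_clamp c).comp_aestronglyMeasurable (hVmeas m).aestronglyMeasurable)
      filter_upwards with ω
      rw [Real.norm_eq_abs]
      exact abs_clamp_le hcpos.le _
    have hAm : MeasurableSet {ω | c ≤ |Vm m ω|} :=
      measurableSet_le measurable_const (hVmeas m).abs
    have hintind : Integrable ({ω | c ≤ |Vm m ω|}.indicator (fun ω => |Vm m ω|)) P :=
      ((hVint m).abs).indicator hAm
    have heq2 : ∫ ω in B, clamp c (Vm m ω) ∂P
        = ∫ ω in B, (clamp c (Vm m ω) - Vm m ω) ∂P := by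
      rw [integral_sub hintclamp ((hVint m).integrableOn), hzero m, sub_zero]
    rw [heq2]
    have habs1 : |∫ ω in B, (clamp c (Vm m ω) - Vm m ω) ∂P|
        ≤ ∫ ω in B, |clamp c (Vm m ω) - Vm m ω| ∂P := by
      have := norm_integral_le_integral_norm (μ := P.restrict B)
        (fun ω => clamp c (Vm m ω) - Vm m ω)
      simpa [Real.norm_eq_abs] using this
    apply habs1.trans
    calc ∫ ω in B, |clamp c (Vm m ω) - Vm m ω| ∂P
        ≤ ∫ ω in B, ({ω | c ≤ |Vm m ω|}.indicator (fun ω => |Vm m ω|)) ω ∂P := by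
          have hintsub : IntegrableOn (fun ω => |clamp c (Vm m ω) - Vm m ω|) B P :=
            (hintclamp.sub ((hVint m).integrableOn)).abs
          apply setIntegral_mono_on hintsub hintind.integrableOn hBmeas
          intro ω _
          by_cases hc2 : c ≤ |Vm m ω|
          · rw [Set.indicator_of_mem (show ω ∈ {ω | c ≤ |Vm m ω|} from hc2)]
            rw [abs_sub_comm]
            exact abs_sub_clamp_le hcpos.le _
          · rw [Set.indicator_of_notMem (show ω ∉ {ω | c ≤ |Vm m ω|} from hc2),
              clamp_eq (not_le.1 hc2), sub_self, abs_zero]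
      _ ≤ ∫ ω, ({ω | c ≤ |Vm m ω|}.indicator (fun ω => |Vm m ω|)) ω ∂P :=
          setIntegral_le_integral hintind
            (Filter.Eventually.of_forall fun ω =>
              Set.indicator_nonneg (fun _ _ => abs_nonneg _) _)
      _ = ∫ ω in {ω | c ≤ |Vm m ω|}, |Vm m ω| ∂P := integral_indicator hAm
      _ ≤ ρ := htail m
  have hlim_le : ∫ ω in B, clamp c (L ω) ∂P ≤ ρ :=
    le_of_tendsto hclampconv
      (Filter.Eventually.of_forall fun m => (le_abs_self _).trans (hbound m))
  have hlim_ge : ε * (P B).toReal ≤ ∫ ω in B, clamp c (L ω) ∂P := by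
    have hintL : IntegrableOn (fun ω => clamp c (L ω)) B P := by
      apply Integrable.integrableOn
      apply Integrable.mono' (integrable_const c)
        ((continuous_clamp c).comp_aestronglyMeasurable hLmeas)
      filter_upwards with ω
      rw [Real.norm_eq_abs]
      exact abs_clamp_le hcpos.le _
    have hmono : ∫ ω in B, (ε:ℝ) ∂P ≤ ∫ ω in B, clamp c (L ω) ∂P := by
      apply integral_mono_ae (integrable_const ε).integrableOn hintL
      rw [EventuallyLE, ae_restrict_iff' hBmeas]
      filter_upwards [hVlim] with ω h hB
      exact le_clamp hcε (h.2 hB)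
    rw [setIntegral_const, smul_eq_mul, mul_comm] at hmono
    exact hmono
  have : ε * (P B).toReal ≤ ε * (P B).toReal / 2 := by
    calc ε * (P B).toReal ≤ ∫ ω in B, clamp c (L ω) ∂P := hlim_ge
      _ ≤ ρ := hlim_le
      _ = ε * (P B).toReal / 2 := hρdef
  nlinarith


end Key


/-- The Lebesgue–Stieltjes measure of a continuous monotone path has no atoms. -/
lemma lsMeasure_singleton_zero {A : ℝ → ℝ} (hmono : Monotone A) (hcont : Continuous A) (x : ℝ) :
    lsMeasure A {x} = 0 := by
  classical
  have hrcA : ∀ y, ContinuousWithinAt A (Set.Ici y) y :=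
    fun y => hcont.continuousAt.continuousWithinAt
  unfold lsMeasure
  rw [dif_pos (⟨hmono, hrcA⟩ : Monotone A ∧ ∀ y, ContinuousWithinAt A (Set.Ici y) y)]
  rw [StieltjesFunction.measure_singleton]
  have hco : ((⟨A, hmono, hrcA⟩ : StieltjesFunction ℝ) : ℝ → ℝ) = A := rfl
  have hll : Function.leftLim A x = A x :=
    leftLim_eq_of_tendsto
      ((hcont.tendsto x).mono_left nhdsWithin_le_nhds)
  rw [hco, hll, sub_self, ENNReal.ofReal_zero]

end AuxComparison

/-- monotonicity of penalized GBSDE solutions. -/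
theorem gbsde_penalized_monotone
    (T : ℝ) (hT : 0 < T) (𝓕 : Filtration ℝ m0) (P : Measure Ω) [IsProbabilityMeasure P]
    (SC : ItoCalculus E T 𝓕 P)
    (A : ℝ → Ω → ℝ) (hA : IsDriver T 𝓕 P A)
    (ξ : Ω → ℝ) (hξmeas : StronglyMeasurable[𝓕 T] ξ) (hξsq : MemLp ξ 2 P)
    (f : ℝ → ℝ → Ω → ℝ)
    (hf_nonneg : ∀ t y ω, 0 ≤ f t y ω)
    (hf_mono : ∀ t ω, Antitone fun y => f t y ω)
    (Y : ℕ → ℝ → Ω → ℝ) (Z : ℕ → ℝ → Ω → E)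
    (hsol : ∀ n : ℕ,
      IsGBSDESolution SC A (fun t y ω => (n : ℝ) * f t y ω) ξ (Y n) (Z n)) :
    ∀ n : ℕ, ∀ᵐ ω ∂P, ∀ t ∈ Set.Icc (0:ℝ) T, Y n t ω ≤ Y (n + 1) t ω := by
  intro n
  classical
  obtain ⟨hadp1, hcad1, hprog1, hmart1, hint1, heq1⟩ := hsol n
  obtain ⟨hadp2, hcad2, hprog2, hmart2, hint2, heq2⟩ := hsol (n + 1)
  have hXmart : Martingale (fun s ω => SC.int (Z (n+1)) s ω - SC.int (Z n) s ω) 𝓕 P :=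
    hmart2.sub hmart1
  have hδadp : ∀ s : ℝ, StronglyMeasurable[𝓕 s] (fun ω => Y (n+1) s ω - Y n s ω) :=
    fun s => (hadp2 s).sub (hadp1 s)
  have hδrc : ∀ (ω : Ω) (x : ℝ),
      ContinuousWithinAt (fun s => Y (n+1) s ω - Y n s ω) (Set.Ici x) x :=
    fun ω x => ((hcad2 ω).1 x).sub ((hcad1 ω).1 x)
  have hatomless : ∀ (ω : Ω) (x : ℝ), lsMeasure (fun v => A v ω) {x} = 0 :=
    fun ω x => lsMeasure_singleton_zero (hA.mono ω) (hA.cont ω) x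
  -- the almost sure pathwise equations, uniformly in the time arguments
  have heqae : ∀ᵐ ω ∂P, (Y (n+1) T ω - Y n T ω = 0) ∧
      ∀ t, 0 ≤ t → ∀ u ∈ Set.Icc t T,
      (SC.int (Z (n+1)) u ω - SC.int (Z n) u ω) - (SC.int (Z (n+1)) t ω - SC.int (Z n) t ω)
        = (Y (n+1) u ω - Y n u ω) - (Y (n+1) t ω - Y n t ω)
          + ((∫ s in Set.Ioc t u, ((n+1 : ℕ) : ℝ) * f s (Y (n+1) s ω) ω
               ∂(lsMeasure fun v => A v ω))
            - ∫ s in Set.Ioc t u, (n : ℝ) * f s (Y n s ω) ω ∂(lsMeasure fun v => A v ω)) := by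
    filter_upwards [heq1, heq2] with ω h1 h2
    have hT1 := h1 T ⟨hT.le, le_rfl⟩
    have hT2 := h2 T ⟨hT.le, le_rfl⟩
    rw [Set.Ioc_self, Measure.restrict_empty, integral_zero_measure] at hT1 hT2
    constructor
    · rw [hT1, hT2]; ring
    · intro t ht0 u hu
      have htT : t ≤ T := hu.1.trans hu.2
      have htmem : t ∈ Set.Icc (0:ℝ) T := ⟨ht0, htT⟩
      have humem : u ∈ Set.Icc (0:ℝ) T := ⟨ht0.trans hu.1, hu.2⟩
      have e1t := h1 t htmem
      have e1u := h1 u humem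
      have e2t := h2 t htmem
      have e2u := h2 u humem
      have hsplit : ∀ g : ℝ → ℝ, IntegrableOn g (Set.Ioc 0 T) (lsMeasure fun v => A v ω) →
          ∫ s in Set.Ioc t T, g s ∂(lsMeasure fun v => A v ω)
          = (∫ s in Set.Ioc t u, g s ∂(lsMeasure fun v => A v ω))
            + ∫ s in Set.Ioc u T, g s ∂(lsMeasure fun v => A v ω) := by
        intro g hg
        rw [← setIntegral_union (Set.Ioc_disjoint_Ioc_of_le le_rfl) measurableSet_Ioc
          (hg.mono_set (Set.Ioc_subset_Ioc ht0 hu.2))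
          (hg.mono_set (Set.Ioc_subset_Ioc (ht0.trans hu.1) le_rfl)),
          Set.Ioc_union_Ioc_eq_Ioc hu.1 hu.2]
      have hs1 := hsplit (fun s => (n : ℝ) * f s (Y n s ω) ω) (hint1 ω)
      have hs2 := hsplit (fun s => ((n+1 : ℕ) : ℝ) * f s (Y (n+1) s ω) ω) (hint2 ω)
      linarith [e1t, e1u, e2t, e2u, hs1, hs2]
  -- comparison at a fixed time
  have hmain : ∀ t : ℝ, 0 ≤ t → t < T → ∀ ε : ℝ, 0 < ε →
      P {ω | Y (n+1) t ω - Y n t ω < -(2*ε)} = 0 := by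
    intro t ht htT ε hε
    refine key_step (P := P) (𝓕 := 𝓕) ht htT hε
      (X := fun s ω => SC.int (Z (n+1)) s ω - SC.int (Z n) s ω) hXmart
      (δ := fun s ω => Y (n+1) s ω - Y n s ω) hδadp hδrc
      (μω := fun ω => lsMeasure fun v => A v ω) hatomless
      (G := fun s ω => ((n+1 : ℕ) : ℝ) * f s (Y (n+1) s ω) ω)
      (H := fun s ω => (n : ℝ) * f s (Y n s ω) ω)
      (fun ω => (hint2 ω).mono_set (Set.Ioc_subset_Ioc ht le_rfl))
      (fun ω => (hint1 ω).mono_set (Set.Ioc_subset_Ioc ht le_rfl))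
      ?_ ?_
    · intro ω s hs hδ
      have hδ' : Y (n+1) s ω - Y n s ω ≤ -ε := hδ
      have hle : Y (n+1) s ω ≤ Y n s ω := by linarith
      have hf1 : f s (Y n s ω) ω ≤ f s (Y (n+1) s ω) ω := hf_mono s ω hle
      have hf2 : 0 ≤ f s (Y (n+1) s ω) ω := hf_nonneg s _ ω
      have hn0 : (0:ℝ) ≤ (n:ℝ) := Nat.cast_nonneg n
      push_cast
      nlinarith
    · filter_upwards [heqae] with ω hω
      exact ⟨hω.1, fun u hu => hω.2 t ht u hu⟩
  -- nonnegativity at fixed rational times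
  have hQ : ∀ᵐ ω ∂P, ∀ q : ℚ, 0 ≤ (q:ℝ) → (q:ℝ) < T →
      0 ≤ Y (n+1) (q:ℝ) ω - Y n (q:ℝ) ω := by
    rw [ae_all_iff]
    intro q
    rcases le_or_gt 0 (q:ℝ) with h0 | h0
    · rcases lt_or_ge (q:ℝ) T with h1 | h1
      · have hk : ∀ k : ℕ, ∀ᵐ ω ∂P,
            ω ∉ {ω | Y (n+1) (q:ℝ) ω - Y n (q:ℝ) ω < -(2*(1/((k:ℝ)+1)))} := by
          intro k
          rw [← measure_eq_zero_iff_ae_notMem]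
          exact hmain q h0 h1 (1/((k:ℝ)+1)) (by positivity)
        have hall := ae_all_iff.2 hk
        filter_upwards [hall] with ω hω _ _
        by_contra hneg
        push_neg at hneg
        obtain ⟨k, hk2⟩ := exists_nat_one_div_lt
          (show (0:ℝ) < -(Y (n+1) (q:ℝ) ω - Y n (q:ℝ) ω)/2 by linarith)
        exact hω k (show _ < _ by linarith)
      · filter_upwards with ω h2 h3; linarith
    · filter_upwards with ω h2 h3; linarith
  -- conclusion
  filter_upwards [hQ, heqae] with ω hQω hωeq
  intro t htmem
  rcases eq_or_lt_of_le htmem.2 with htT | htT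
  · have h0 := hωeq.1
    rw [htT]
    linarith
  · have hrcω : ContinuousWithinAt (fun s => Y (n+1) s ω - Y n s ω) (Set.Ici t) t := hδrc ω t
    have hchoice : ∀ k : ℕ, ∃ q : ℚ, t < (q:ℝ) ∧ (q:ℝ) < min T (t + 1/((k:ℝ)+1)) := by
      intro k
      apply exists_rat_btwn
      apply lt_min htT
      have : (0:ℝ) < 1/((k:ℝ)+1) := by positivity
      linarith
    choose q hq1 hq2 using hchoice
    have hqtend : Tendsto (fun k => ((q k : ℝ))) atTop (𝓝 t) := by
      have h2 : Tendsto (fun k : ℕ => t + 1/((k:ℝ)+1)) atTop (𝓝 t) := by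
        have h3 := (tendsto_const_nhds (x := t) (f := atTop (α := ℕ))).add
          tendsto_one_div_add_atTop_nhds_zero_nat
        rwa [add_zero] at h3
      apply tendsto_of_tendsto_of_tendsto_of_le_of_le tendsto_const_nhds h2
        (fun k => (hq1 k).le)
        (fun k => ((hq2 k).trans_le (min_le_right _ _)).le)
    have hδtend : Tendsto (fun k => Y (n+1) ((q k : ℝ)) ω - Y n ((q k : ℝ)) ω) atTop
        (𝓝 (Y (n+1) t ω - Y n t ω)) := by
      refine hrcω.tendsto.comp ?_
      rw [tendsto_nhdsWithin_iff]
      exact ⟨hqtend, Filter.Eventually.of_forall fun k => (hq1 k).le⟩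
    have hge : 0 ≤ Y (n+1) t ω - Y n t ω := by
      apply ge_of_tendsto hδtend
      filter_upwards with k
      exact hQω (q k) (htmem.1.trans (hq1 k).le) ((hq2 k).trans_le (min_le_left _ _))
    linarith


end GBSDE
end
end

section
/- Dirac-limit lemma for exponential penalization along the right support: Let η be an 𝔽-optional, bounded, right-continuous process and ξ_T an F_T-measurable bounded random variable. Then for any 𝔽-stopping time ν taking values in S̄ = S^r(A)∪{T} almost surely, lim_{n→∞} [ ξ_T · e^{n(A_ν − A_T)} + ∫_{(ν,T]} η_s · n e^{n(A_ν − A_s)} dA_s ] = ξ_T·1_{{ν=T}} + η_ν·1_{{ν<T}} almost surely. -/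
open MeasureTheory Set Filter Function
open scoped ENNReal NNReal Topology

noncomputable section

namespace GBSDE

variable {Ω E : Type*} {m0 : MeasurableSpace Ω}
  [NormedAddCommGroup E] [NormedSpace ℝ E] [CompleteSpace E]


section DiracAux

open Real in
lemma aux_tendsto_nat_mul_exp_neg {c : ℝ} (hc : 0 < c) :
    Tendsto (fun k : ℕ => (k : ℝ) * Real.exp (-((k : ℝ) * c))) atTop (𝓝 0) := by
  have h1 : Tendsto (fun k : ℕ => (k : ℝ) * c) atTop atTop :=
    tendsto_natCast_atTop_atTop.atTop_mul_const hc
  have h2 := (Real.tendsto_pow_mul_exp_neg_atTop_nhds_zero 1).comp h1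
  have h3 := h2.const_mul (1 / c)
  rw [mul_zero] at h3
  refine h3.congr fun k => ?_
  simp only [Function.comp_apply, pow_one]
  field_simp

lemma aux_stieltjes_map_restrict (f : StieltjesFunction ℝ) (hf : Continuous f) {b c : ℝ}
    (hbc : b ≤ c) :
    (f.measure.restrict (Set.Ioc b c)).map f = volume.restrict (Set.Ioc (f b) (f c)) := by
  have hfm : Measurable f := f.mono.measurable
  have hfin : IsFiniteMeasure (f.measure.restrict (Set.Ioc b c)) := by
    constructor
    rw [Measure.restrict_apply_univ, f.measure_Ioc]
    exact ENNReal.ofReal_lt_top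
  refine Measure.ext_of_Iic _ _ (fun y => ?_)
  rw [Measure.map_apply hfm measurableSet_Iic,
    Measure.restrict_apply (hfm measurableSet_Iic),
    Measure.restrict_apply measurableSet_Iic]
  have hrhs : Set.Iic y ∩ Set.Ioc (f b) (f c) = Set.Ioc (f b) (min y (f c)) := by
    ext x
    simp only [Set.mem_inter_iff, Set.mem_Iic, Set.mem_Ioc, le_min_iff]
    tauto
  rw [hrhs, Real.volume_Ioc]
  rcases lt_or_ge y (f b) with hy | hy
  · have hempty : f ⁻¹' Set.Iic y ∩ Set.Ioc b c = ∅ := by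
      ext x
      simp only [Set.mem_inter_iff, Set.mem_preimage, Set.mem_Iic, Set.mem_Ioc,
        Set.mem_empty_iff_false, iff_false, not_and]
      intro hfx hbx _
      exact absurd (hfx.trans_lt hy) (not_lt.2 (f.mono hbx.le))
    rw [hempty, measure_empty, Eq.comm, ENNReal.ofReal_eq_zero]
    have : min y (f c) ≤ y := min_le_left _ _
    linarith
  rcases le_or_gt (f c) y with hy' | hy'
  · have hfull : f ⁻¹' Set.Iic y ∩ Set.Ioc b c = Set.Ioc b c := by
      apply Set.inter_eq_right.mpr
      intro x hx
      exact Set.mem_preimage.2 ((f.mono hx.2).trans hy')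
    rw [hfull, f.measure_Ioc, min_eq_right hy']
  · set S := {t : ℝ | t ≤ c ∧ f t ≤ y} with hS
    have hbS : b ∈ S := ⟨hbc, hy⟩
    have hSne : S.Nonempty := ⟨b, hbS⟩
    have hSbdd : BddAbove S := ⟨c, fun t ht => ht.1⟩
    set s := sSup S with hs
    have hbs : b ≤ s := le_csSup hSbdd hbS
    have hsc : s ≤ c := csSup_le hSne (fun t ht => ht.1)
    have hfs_le : f s ≤ y := by
      rcases eq_or_lt_of_le hbs with h | h
      · exact h ▸ hy
      · have hev : ∀ᶠ t in 𝓝[<] s, f t ≤ y := by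
          filter_upwards [Ioo_mem_nhdsLT_of_mem ⟨h, le_refl s⟩] with t ht
          obtain ⟨u, huS, htu⟩ := exists_lt_of_lt_csSup hSne ht.2
          exact (f.mono htu.le).trans huS.2
        exact le_of_tendsto ((hf.tendsto s).mono_left nhdsWithin_le_nhds) hev
    have hgt : ∀ t, s < t → t ≤ c → y < f t := by
      intro t h1 h2
      by_contra hle
      exact absurd (le_csSup hSbdd ⟨h2, not_lt.1 hle⟩) (not_le.2 h1)
    have hsc' : s < c := lt_of_le_of_ne hsc (fun h => absurd (h ▸ hfs_le) (not_le.2 hy'))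
    have hfs_ge : y ≤ f s := by
      have hev : ∀ᶠ t in 𝓝[>] s, y ≤ f t := by
        filter_upwards [Ioo_mem_nhdsGT_of_mem ⟨le_refl s, hsc'⟩] with t ht
        exact (hgt t ht.1 ht.2.le).le
      exact ge_of_tendsto ((hf.tendsto s).mono_left nhdsWithin_le_nhds) hev
    have hfs : f s = y := le_antisymm hfs_le hfs_ge
    have hset : f ⁻¹' Set.Iic y ∩ Set.Ioc b c = Set.Ioc b s := by
      ext x
      simp only [Set.mem_inter_iff, Set.mem_preimage, Set.mem_Iic, Set.mem_Ioc]
      constructor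
      · rintro ⟨hfx, hbx, hxc⟩
        exact ⟨hbx, le_csSup hSbdd ⟨hxc, hfx⟩⟩
      · rintro ⟨hbx, hxs⟩
        exact ⟨(f.mono hxs).trans hfs_le, hbx, hxs.trans hsc⟩
    rw [hset, f.measure_Ioc, hfs, min_eq_left hy'.le]

lemma aux_stieltjes_setIntegral (f : StieltjesFunction ℝ) (hf : Continuous f) {b c : ℝ}
    (hbc : b ≤ c) {g : ℝ → ℝ} (hg : Continuous g) :
    ∫ s in Set.Ioc b c, g (f s) ∂f.measure = ∫ x in Set.Ioc (f b) (f c), g x := by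
  rw [← aux_stieltjes_map_restrict f hf hbc]
  exact (integral_map f.mono.measurable.aemeasurable hg.aestronglyMeasurable).symm

lemma aux_integral_exp_decay (n : ℝ) {α β : ℝ} (hαβ : α ≤ β) :
    ∫ x in Set.Ioc α β, n * Real.exp (n * (α - x)) = 1 - Real.exp (n * (α - β)) := by
  rw [← intervalIntegral.integral_of_le hαβ]
  have hderiv : ∀ x ∈ Set.uIcc α β,
      HasDerivAt (fun x => -Real.exp (n * (α - x))) (n * Real.exp (n * (α - x))) x := by
    intro x _
    have h1 : HasDerivAt (fun x : ℝ => α - x) (-1) x := (hasDerivAt_id x).const_sub α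
    have h2 : HasDerivAt (fun x : ℝ => n * (α - x)) (n * -1) x := h1.const_mul n
    have h4 : HasDerivAt (fun x => -Real.exp (n * (α - x))) _ x := h2.exp.neg
    convert h4 using 1
    ring
  have hcont : Continuous fun x => n * Real.exp (n * (α - x)) := by continuity
  rw [intervalIntegral.integral_eq_sub_of_hasDerivAt hderiv (hcont.intervalIntegrable α β)]
  simp [sub_self, Real.exp_zero]
  ring

lemma aux_eta_section_sm {Ω : Type*} {m0 : MeasurableSpace Ω} (𝓕 : Filtration ℝ m0)
    (η : ℝ → Ω → ℝ) (hη : ProgMeasurable 𝓕 η) (T : ℝ) (ω : Ω) :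
    StronglyMeasurable fun s : ℝ => η (min s T) ω := by
  have h := hη T
  have hm : @Measurable ℝ (Set.Iic T × Ω) _ (Subtype.instMeasurableSpace.prod (𝓕 T))
      (fun s : ℝ => ((⟨min s T, Set.mem_Iic.2 (min_le_right _ _)⟩ : Set.Iic T), ω)) := by
    refine @Measurable.prodMk ℝ _ (Set.Iic T) Ω Subtype.instMeasurableSpace (𝓕 T) _ _ ?_ ?_
    · exact Measurable.subtype_mk (measurable_id.min measurable_const)
    · exact measurable_const
  exact h.comp_measurable hm

end DiracAux

/-- Dirac-limit lemma for exponential penalization along the right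
support of the driver. -/
theorem dirac_limit_right_support
    (T : ℝ) (hT : 0 < T) (𝓕 : Filtration ℝ m0) (P : Measure Ω) [IsProbabilityMeasure P]
    (A : ℝ → Ω → ℝ) (hA : IsDriver T 𝓕 P A)
    (η : ℝ → Ω → ℝ) (hη_prog : ProgMeasurable 𝓕 η)
    (Cη : ℝ) (hη_bdd : ∀ t ω, |η t ω| ≤ Cη)
    (hη_rc : ∀ ω x, ContinuousWithinAt (fun t => η t ω) (Set.Ici x) x)
    (ξ : Ω → ℝ) (hξmeas : StronglyMeasurable[𝓕 T] ξ)
    (Cξ : ℝ) (hξ_bdd : ∀ ω, |ξ ω| ≤ Cξ)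
    (ν : Ω → ℝ) (hν : IsStoppingTime 𝓕 (fun ω => (ν ω : WithTop ℝ))) (hν_range : ∀ ω, ν ω ∈ Set.Icc 0 T)
    (hν_supp : ∀ᵐ ω ∂P, ν ω ∈ rightSupport A ω ∪ {T}) :
    ∀ᵐ ω ∂P,
      Tendsto (fun n : ℕ =>
          ξ ω * Real.exp ((n : ℝ) * (A (ν ω) ω - A T ω))
          + ∫ s in Set.Ioc (ν ω) T,
              η s ω * ((n : ℝ) * Real.exp ((n : ℝ) * (A (ν ω) ω - A s ω)))
              ∂(lsMeasure fun u => A u ω))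
        atTop (𝓝 (if ν ω = T then ξ ω else η (ν ω) ω)) := by
  filter_upwards [hν_supp] with ω hω
  have hmono : Monotone fun t => A t ω := hA.mono ω
  have hcont : Continuous fun t => A t ω := hA.cont ω
  set f : StieltjesFunction ℝ := ⟨fun t => A t ω, hmono, fun x => hcont.continuousWithinAt⟩ with hfdef
  have hls : (lsMeasure fun u => A u ω) = f.measure := by
    rw [lsMeasure, dif_pos ⟨hmono, fun x => hcont.continuousWithinAt⟩]
  by_cases hT' : ν ω = T
  · have heq : (fun n : ℕ => ξ ω * Real.exp ((n : ℝ) * (A (ν ω) ω - A T ω))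
        + ∫ s in Set.Ioc (ν ω) T,
            η s ω * ((n : ℝ) * Real.exp ((n : ℝ) * (A (ν ω) ω - A s ω)))
            ∂(lsMeasure fun u => A u ω)) = fun _ => ξ ω := by
      funext n
      rw [hT']
      simp [Set.Ioc_self]
    rw [heq, if_pos hT']
    exact tendsto_const_nhds
  · rw [if_neg hT']
    have hmem : ν ω ∈ rightSupport A ω := by
      rcases hω with h | h
      · exact h
      · exact absurd (Set.mem_singleton_iff.1 h) hT'
    set t0 := ν ω with ht0def
    have ht0T : t0 < T := lt_of_le_of_ne (hν_range ω).2 hT'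
    have hsup : ∀ ε > 0, A t0 ω < A (t0 + ε) ω := hmem
    have hαT : A t0 ω < A T ω := by
      have := hsup (T - t0) (by linarith)
      rwa [show t0 + (T - t0) = T by ring] at this
    set k : ℕ → ℝ → ℝ := fun n s => (n : ℝ) * Real.exp ((n : ℝ) * (A t0 ω - A s ω)) with hkdef
    show Tendsto (fun n : ℕ => ξ ω * Real.exp ((n : ℝ) * (A t0 ω - A T ω))
        + ∫ s in Set.Ioc t0 T, η s ω * k n s ∂(lsMeasure fun u => A u ω)) atTop (𝓝 (η t0 ω))
    rw [hls]
    have hkcont : ∀ n : ℕ, Continuous (k n) := fun n =>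
      continuous_const.mul ((continuous_const.mul (continuous_const.sub hcont)).rexp)
    have hknn : ∀ (n : ℕ) (s : ℝ), 0 ≤ k n s := fun n s =>
      mul_nonneg (Nat.cast_nonneg n) (Real.exp_pos _).le
    have hkle : ∀ (n : ℕ) (s : ℝ), t0 ≤ s → k n s ≤ (n : ℝ) := by
      intro n s hs
      have h1 : A t0 ω ≤ A s ω := hmono hs
      calc k n s ≤ (n : ℝ) * 1 := by
            refine mul_le_mul_of_nonneg_left ?_ (Nat.cast_nonneg n)
            exact Real.exp_le_one_iff.2
              (mul_nonpos_of_nonneg_of_nonpos (Nat.cast_nonneg n) (by linarith))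
        _ = (n : ℝ) := mul_one _
    have hμfin : ∀ a b : ℝ, f.measure (Set.Ioc a b) ≠ ∞ := fun a b => by
      rw [f.measure_Ioc]; exact ENNReal.ofReal_ne_top
    have hItot : ∀ u : ℝ, t0 ≤ u → ∀ n : ℕ,
        ∫ s in Set.Ioc t0 u, k n s ∂f.measure
          = 1 - Real.exp ((n : ℝ) * (A t0 ω - A u ω)) := by
      intro u hu n
      have hgc : Continuous fun x : ℝ => (n : ℝ) * Real.exp ((n : ℝ) * (A t0 ω - x)) :=
        continuous_const.mul ((continuous_const.mul (continuous_const.sub continuous_id)).rexp)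
      calc ∫ s in Set.Ioc t0 u, k n s ∂f.measure
          = ∫ x in Set.Ioc (A t0 ω) (A u ω), (n : ℝ) * Real.exp ((n : ℝ) * (A t0 ω - x)) :=
            aux_stieltjes_setIntegral f hcont hu hgc
        _ = 1 - Real.exp ((n : ℝ) * (A t0 ω - A u ω)) :=
            aux_integral_exp_decay (n : ℝ) (hmono hu)
    have hsec : ∀ v, v ≤ T → AEStronglyMeasurable (fun s => η s ω)
        (f.measure.restrict (Set.Ioc t0 v)) := by
      intro v hv
      refine (aux_eta_section_sm 𝓕 η hη_prog T ω).aestronglyMeasurable.congr ?_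
      filter_upwards [ae_restrict_mem measurableSet_Ioc] with s hs
      rw [min_eq_left (hs.2.trans hv)]
    have hCη : 0 ≤ Cη := le_trans (abs_nonneg _) (hη_bdd 0 ω)
    have hIntk : ∀ (n : ℕ) (v : ℝ), IntegrableOn (k n) (Set.Ioc t0 v) f.measure := by
      intro n v
      refine ⟨((hkcont n).aestronglyMeasurable).restrict,
        HasFiniteIntegral.restrict_of_bounded (C := (n : ℝ)) (hμfin t0 v).lt_top ?_⟩
      filter_upwards [ae_restrict_mem measurableSet_Ioc] with s hs
      rw [Real.norm_eq_abs, abs_of_nonneg (hknn n s)]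
      exact hkle n s hs.1.le
    have hIntη : ∀ (n : ℕ) (v : ℝ), v ≤ T →
        IntegrableOn (fun s => η s ω * k n s) (Set.Ioc t0 v) f.measure := by
      intro n v hv
      refine ⟨(hsec v hv).mul ((hkcont n).aestronglyMeasurable).restrict,
        HasFiniteIntegral.restrict_of_bounded (C := Cη * (n : ℝ)) (hμfin t0 v).lt_top ?_⟩
      filter_upwards [ae_restrict_mem measurableSet_Ioc] with s hs
      rw [Real.norm_eq_abs, abs_mul, abs_of_nonneg (hknn n s)]
      exact mul_le_mul (hη_bdd s ω) (hkle n s hs.1.le) (hknn n s) hCη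
    have hIntd : ∀ (n : ℕ) (v : ℝ), v ≤ T →
        IntegrableOn (fun s => (η s ω - η t0 ω) * k n s) (Set.Ioc t0 v) f.measure := by
      intro n v hv
      have heqf : (fun s => (η s ω - η t0 ω) * k n s)
          = fun s => η s ω * k n s - η t0 ω * k n s := funext fun s => by ring
      rw [heqf]
      exact (hIntη n v hv).sub ((hIntk n v).const_mul (η t0 ω))
    set E : ℕ → ℝ := fun n =>
      ∫ s in Set.Ioc t0 T, (η s ω - η t0 ω) * k n s ∂f.measure with hEdef
    have hdecomp : ∀ n : ℕ,
        (∫ s in Set.Ioc t0 T, η s ω * k n s ∂f.measure)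
          = η t0 ω * (1 - Real.exp ((n : ℝ) * (A t0 ω - A T ω))) + E n := by
      intro n
      have h1 := hIntη n T le_rfl
      have h2 := (hIntk n T).const_mul (η t0 ω)
      have hE' : E n = (∫ s in Set.Ioc t0 T, η s ω * k n s ∂f.measure)
          - ∫ s in Set.Ioc t0 T, η t0 ω * k n s ∂f.measure := by
        rw [← integral_sub h1 h2]
        simp only [hEdef]
        congr 1
        funext s
        ring
      have h3 : (∫ s in Set.Ioc t0 T, η t0 ω * k n s ∂f.measure)
          = η t0 ω * (1 - Real.exp ((n : ℝ) * (A t0 ω - A T ω))) := by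
        rw [MeasureTheory.integral_const_mul, hItot T ht0T.le n]
      rw [hE', h3]
      ring
    have hE0 : Tendsto E atTop (𝓝 0) := by
      rw [Metric.tendsto_atTop]
      intro ε hε
      have hrc := hη_rc ω t0
      rw [Metric.continuousWithinAt_iff] at hrc
      obtain ⟨δ, hδpos, hδ⟩ := hrc (ε / 3) (by linarith)
      set u := min (t0 + δ / 2) T with hu
      have ht0u : t0 < u := lt_min (by linarith) ht0T
      have huT : u ≤ T := min_le_right _ _
      have hηnear : ∀ s ∈ Set.Ioc t0 u, |η s ω - η t0 ω| ≤ ε / 3 := by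
        intro s hs
        have h1 : s ∈ Set.Ici t0 := le_of_lt hs.1
        have h2 : dist s t0 < δ := by
          rw [Real.dist_eq, abs_of_nonneg (by linarith [hs.1.le] : (0:ℝ) ≤ s - t0)]
          have h3 : s ≤ t0 + δ / 2 := hs.2.trans (min_le_left _ _)
          linarith
        have := hδ h1 h2
        rw [Real.dist_eq] at this
        exact this.le
      have hαu : A t0 ω < A u ω := by
        have := hsup (u - t0) (by linarith)
        rwa [show t0 + (u - t0) = u by ring] at this
      have hcpos : 0 < A u ω - A t0 ω := by linarith
      have hB : Tendsto (fun n : ℕ =>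
          2 * Cη * ((n : ℝ) * Real.exp (-((n : ℝ) * (A u ω - A t0 ω)))) * (A T ω - A t0 ω))
          atTop (𝓝 0) := by
        have h1 := (aux_tendsto_nat_mul_exp_neg hcpos).const_mul (2 * Cη)
        rw [mul_zero] at h1
        have h2 := h1.mul_const (A T ω - A t0 ω)
        rwa [zero_mul] at h2
      obtain ⟨N, hN⟩ := (Metric.tendsto_atTop.1 hB) (ε / 3) (by linarith)
      refine ⟨N, fun n hn => ?_⟩
      have hsplit : E n = (∫ s in Set.Ioc t0 u, (η s ω - η t0 ω) * k n s ∂f.measure)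
          + ∫ s in Set.Ioc u T, (η s ω - η t0 ω) * k n s ∂f.measure := by
        rw [hEdef]
        rw [show Set.Ioc t0 T = Set.Ioc t0 u ∪ Set.Ioc u T from
          (Set.Ioc_union_Ioc_eq_Ioc ht0u.le huT).symm]
        exact setIntegral_union (Set.Ioc_disjoint_Ioc_of_le le_rfl) measurableSet_Ioc
          (hIntd n u huT) ((hIntd n T le_rfl).mono_set (Set.Ioc_subset_Ioc_left ht0u.le))
      have hp1 : |∫ s in Set.Ioc t0 u, (η s ω - η t0 ω) * k n s ∂f.measure| ≤ ε / 3 := by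
        have habs : |∫ s in Set.Ioc t0 u, (η s ω - η t0 ω) * k n s ∂f.measure|
            ≤ ∫ s in Set.Ioc t0 u, |(η s ω - η t0 ω) * k n s| ∂f.measure := by
          rw [← Real.norm_eq_abs]
          refine (norm_integral_le_integral_norm _).trans ?_
          simp only [Real.norm_eq_abs]
          exact le_rfl
        refine habs.trans ?_
        have hmon : (∫ s in Set.Ioc t0 u, |(η s ω - η t0 ω) * k n s| ∂f.measure)
            ≤ ∫ s in Set.Ioc t0 u, (ε / 3) * k n s ∂f.measure := by
          refine setIntegral_mono_on (hIntd n u huT).abs ((hIntk n u).const_mul _)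
            measurableSet_Ioc ?_
          intro s hs
          rw [abs_mul, abs_of_nonneg (hknn n s)]
          exact mul_le_mul_of_nonneg_right (hηnear s hs) (hknn n s)
        refine hmon.trans ?_
        rw [MeasureTheory.integral_const_mul, hItot u ht0u.le n]
        have hexp := (Real.exp_pos ((n : ℝ) * (A t0 ω - A u ω))).le
        nlinarith
      have hp2 : |∫ s in Set.Ioc u T, (η s ω - η t0 ω) * k n s ∂f.measure|
          ≤ 2 * Cη * ((n : ℝ) * Real.exp (-((n : ℝ) * (A u ω - A t0 ω)))) * (A T ω - A t0 ω) := by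
        have hb : ∀ s ∈ Set.Ioc u T, ‖(η s ω - η t0 ω) * k n s‖
            ≤ 2 * Cη * ((n : ℝ) * Real.exp (-((n : ℝ) * (A u ω - A t0 ω)))) := by
          intro s hs
          rw [Real.norm_eq_abs, abs_mul, abs_of_nonneg (hknn n s)]
          have b1 := abs_le.1 (hη_bdd s ω)
          have b2 := abs_le.1 (hη_bdd t0 ω)
          have h1 : |η s ω - η t0 ω| ≤ 2 * Cη := abs_le.2 ⟨by linarith, by linarith⟩
          have h2 : k n s ≤ (n : ℝ) * Real.exp (-((n : ℝ) * (A u ω - A t0 ω))) := by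
            refine mul_le_mul_of_nonneg_left ?_ (Nat.cast_nonneg n)
            refine Real.exp_le_exp.2 ?_
            have h3 : A u ω ≤ A s ω := hmono hs.1.le
            have hn0 : (0:ℝ) ≤ (n : ℝ) := Nat.cast_nonneg n
            nlinarith
          exact mul_le_mul h1 h2 (hknn n s)
            (by positivity)
        have hnorm := norm_setIntegral_le_of_norm_le_const_ae' (hμfin u T).lt_top
          (ae_of_all _ hb)
        rw [Real.norm_eq_abs, measureReal_def] at hnorm
        refine hnorm.trans ?_
        have hmeas : (f.measure (Set.Ioc u T)).toReal = A T ω - A u ω := by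
          rw [f.measure_Ioc, ENNReal.toReal_ofReal (by linarith [hmono huT] : (0:ℝ) ≤ A T ω - A u ω)]
        rw [hmeas]
        have hC0 : 0 ≤ 2 * Cη * ((n : ℝ) * Real.exp (-((n : ℝ) * (A u ω - A t0 ω)))) := by
          positivity
        have : A T ω - A u ω ≤ A T ω - A t0 ω := by linarith
        exact mul_le_mul_of_nonneg_left this hC0
      have hBn := hN n hn
      rw [Real.dist_eq, sub_zero] at hBn
      have hBn' : 2 * Cη * ((n : ℝ) * Real.exp (-((n : ℝ) * (A u ω - A t0 ω)))) * (A T ω - A t0 ω)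
          < ε / 3 := lt_of_le_of_lt (le_abs_self _) hBn
      rw [Real.dist_eq, sub_zero]
      calc |E n| ≤ |∫ s in Set.Ioc t0 u, (η s ω - η t0 ω) * k n s ∂f.measure|
            + |∫ s in Set.Ioc u T, (η s ω - η t0 ω) * k n s ∂f.measure| := by
            rw [hsplit]; exact abs_add_le _ _
        _ < ε := by linarith
    have hexp0 : Tendsto (fun n : ℕ => Real.exp ((n : ℝ) * (A t0 ω - A T ω))) atTop (𝓝 0) := by
      have h1 : Tendsto (fun n : ℕ => (n : ℝ) * (A t0 ω - A T ω)) atTop atBot :=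
        tendsto_natCast_atTop_atTop.atTop_mul_const_of_neg' (by linarith)
      exact Real.tendsto_exp_atBot.comp h1
    have hmain : Tendsto (fun n : ℕ => ξ ω * Real.exp ((n : ℝ) * (A t0 ω - A T ω))
        + (η t0 ω * (1 - Real.exp ((n : ℝ) * (A t0 ω - A T ω))) + E n)) atTop
        (𝓝 (ξ ω * 0 + (η t0 ω * (1 - 0) + 0))) :=
      (hexp0.const_mul (ξ ω)).add
        (((tendsto_const_nhds.sub hexp0).const_mul (η t0 ω)).add hE0)
    have hval : ξ ω * 0 + (η t0 ω * (1 - 0) + 0) = η t0 ω := by ring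
    rw [hval] at hmain
    refine hmain.congr fun n => ?_
    rw [hdecomp n]

end GBSDE
end
end
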